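/- arXiv:1301.4359 — 7 statements merged into one kernel-verified Lean document; each statement's English description precedes it below -/
import Mathlib

section
/- The series 1 + (1/5^2)(1/2) + (1/9^2)((1·3)/(2·4)) + ··· , i.e. ∑_{n=0}^∞ ((1/2)_n / n!) · 1/(4n+1)^2, equals π^{5/2} / (8√2 Γ(3/4)^2). -/
open Real BigOperators

noncomputable def poch (a : ℝ) (n : ℕ) : ℝ := ∏ i ∈ Finset.range n, (a + i)

noncomputable def digamma (x : ℝ) : ℝ := deriv Real.Gamma x / Real.Gamma x

namespace Aux

noncomputable def c (n : ℕ) : ℝ := poch (1/2) n / n.factorial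

lemma c_zero : c 0 = 1 := by simp [c, poch]

lemma c_succ (n : ℕ) : c (n+1) = c n * ((n + 1/2) / (n+1)) := by
  have h : (Nat.factorial (n+1) : ℝ) ≠ 0 := by positivity
  simp only [c, poch, Finset.prod_range_succ, Nat.factorial_succ]
  push_cast
  field_simp
  ring

lemma c_pos (n : ℕ) : 0 < c n := by
  induction n with
  | zero => rw [c_zero]; norm_num
  | succ n ih => rw [c_succ]; positivity

lemma c_le_one (n : ℕ) : c n ≤ 1 := by
  induction n with
  | zero => rw [c_zero]
  | succ n ih =>
    rw [c_succ]
    have h1 : ((n:ℝ) + 1/2) / (n+1) ≤ 1 := by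
      rw [div_le_one (by positivity)]; linarith
    nlinarith [c_pos n]

lemma c_sq (n : ℕ) : c n ^ 2 * (n+1) ≤ 1 := by
  induction n with
  | zero => rw [c_zero]; norm_num
  | succ n ih =>
    rw [c_succ]
    have h := c_pos n
    have hn : (0:ℝ) < n + 1 := by positivity
    push_cast
    rw [mul_pow, div_pow]
    have key : ((n:ℝ) + 1/2)^2 * (n+1+1) ≤ (n+1)^2 * (n+1) := by nlinarith
    have h2 : (0:ℝ) < ((n:ℝ)+1)^2 := by positivity
    calc c n ^ 2 * (((n:ℝ) + 1/2) ^ 2 / (n + 1) ^ 2) * (n + 1 + 1)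
        = (c n ^ 2 * (n+1)) * ((((n:ℝ) + 1/2)^2 * (n+1+1)) / ((n+1)^2 * (n+1))) := by
          field_simp
      _ ≤ 1 * 1 := by
          apply mul_le_mul ih _ (by positivity) zero_le_one
          rw [div_le_one (by positivity)]; exact key
      _ = 1 := by norm_num

lemma c_le_inv_sqrt (n : ℕ) : c n ≤ 1 / Real.sqrt (n+1) := by
  have h1 : (0:ℝ) < Real.sqrt (n+1) := Real.sqrt_pos.mpr (by positivity)
  rw [le_div_iff₀ h1]
  have h2 : (c n * Real.sqrt (n+1))^2 ≤ 1 := by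
    rw [mul_pow, Real.sq_sqrt (by positivity : (0:ℝ) ≤ (n:ℝ)+1)]
    exact c_sq n
  nlinarith [mul_pos (c_pos n) h1]

noncomputable def f (x : ℝ) : ℝ := ∑' n, c n * x ^ n
noncomputable def D (x : ℝ) : ℝ := ∑' n, c n * ((n:ℝ) * x ^ (n-1))

lemma summable_np1_geom {r : ℝ} (h0 : 0 ≤ r) (h : r < 1) :
    Summable (fun n : ℕ => ((n:ℝ)+1) * r ^ n) := by
  have h1 : Summable fun n : ℕ => (n:ℝ)^1 * r^n :=
    summable_pow_mul_geometric_of_norm_lt_one 1 (by rwa [Real.norm_eq_abs, abs_of_nonneg h0])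
  have h2 : Summable fun n : ℕ => r^n := summable_geometric_of_lt_one h0 h
  simpa [add_mul] using h1.add h2

lemma summable_cf {x : ℝ} (hx : |x| < 1) : Summable (fun n => c n * x ^ n) := by
  apply Summable.of_norm_bounded (summable_geometric_of_lt_one (abs_nonneg x) hx)
  intro n
  rw [norm_mul, norm_pow, Real.norm_eq_abs, Real.norm_eq_abs,
    abs_of_pos (c_pos n)]
  calc c n * |x| ^ n ≤ 1 * |x| ^ n := by
        apply mul_le_mul_of_nonneg_right (c_le_one n) (by positivity)
    _ = |x| ^ n := one_mul _

lemma summable_cD {x : ℝ} {r : ℝ} (hx : |x| ≤ r) (hr : r < 1) (hr0 : 0 < r) :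
    Summable (fun n => c n * ((n:ℝ) * x ^ (n-1))) := by
  have hsum0 : Summable fun n : ℕ => (n:ℝ)^1 * r^n :=
    summable_pow_mul_geometric_of_norm_lt_one 1
      (by rwa [Real.norm_eq_abs, abs_of_nonneg hr0.le])
  have hsum : Summable (fun n : ℕ => (n:ℝ) * r ^ (n-1)) := by
    have := hsum0.mul_left (1/r)
    apply this.congr
    intro n
    cases n with
    | zero => simp
    | succ m =>
      simp only [Nat.add_sub_cancel, pow_one]
      rw [pow_succ]
      field_simp
  apply Summable.of_norm_bounded hsum
  intro n
  rw [norm_mul, norm_mul, norm_pow, Real.norm_eq_abs, Real.norm_eq_abs, Real.norm_eq_abs,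
    abs_of_pos (c_pos n), abs_of_nonneg (n.cast_nonneg : (0:ℝ) ≤ n)]
  have h1 : |x| ^ (n-1) ≤ r ^ (n-1) := pow_le_pow_left₀ (abs_nonneg x) hx _
  calc c n * ((n:ℝ) * |x| ^ (n-1)) ≤ 1 * ((n:ℝ) * r ^ (n-1)) := by
        apply mul_le_mul (c_le_one n) _ (by positivity) zero_le_one
        exact mul_le_mul_of_nonneg_left h1 (n.cast_nonneg)
    _ = (n:ℝ) * r ^ (n-1) := one_mul _

lemma hasDerivAt_f {x : ℝ} (hx : |x| < 1) : HasDerivAt f (D x) x := by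
  set r : ℝ := (1 + |x|) / 2 with hr
  have hxr : |x| < r := by rw [hr]; linarith
  have hr1 : r < 1 := by rw [hr]; linarith
  have hr0 : 0 < r := lt_of_le_of_lt (abs_nonneg x) hxr
  have H : HasDerivAt (fun z : ℝ => ∑' n, c n * z ^ n)
      (∑' n, c n * ((n:ℝ) * x ^ (n-1))) x := by
    refine hasDerivAt_tsum_of_isPreconnected
      (u := fun n => c n * ((n:ℝ) * r ^ (n-1)))
      (t := Set.Ioo (-r) r) (y₀ := 0)
      (g := fun n z => c n * z ^ n)
      (g' := fun n y => c n * ((n:ℝ) * y ^ (n-1)))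
      ?_ isOpen_Ioo (convex_Ioo _ _).isPreconnected ?_ ?_ ?_ ?_ ?_
    · exact summable_cD (by rw [abs_of_nonneg hr0.le]) hr1 hr0
    · intro n y _
      exact (hasDerivAt_pow n y).const_mul (c n)
    · intro n y hy
      have hy' : |y| ≤ r := by
        rw [abs_le]; exact ⟨le_of_lt hy.1, le_of_lt hy.2⟩
      rw [Real.norm_eq_abs, abs_mul, abs_mul, abs_of_pos (c_pos n),
        abs_of_nonneg (n.cast_nonneg : (0:ℝ) ≤ n), abs_pow]
      apply mul_le_mul_of_nonneg_left _ (le_of_lt (c_pos n))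
      apply mul_le_mul_of_nonneg_left _ (n.cast_nonneg)
      exact pow_le_pow_left₀ (abs_nonneg y) hy' _
    · exact ⟨by linarith, hr0⟩
    · apply summable_of_ne_finset_zero (s := {0})
      intro n hn
      simp only [Finset.mem_singleton] at hn
      rw [zero_pow hn, mul_zero]
    · rw [Set.mem_Ioo]
      exact ⟨by linarith [neg_abs_le x], by linarith [le_abs_self x]⟩
  exact H

lemma summable_half {x : ℝ} (hx : |x| < 1) :
    Summable (fun n => c n * ((n:ℝ)+1/2) * x^n) := by
  apply Summable.of_norm_bounded (summable_np1_geom (abs_nonneg x) hx)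
  intro n
  rw [Real.norm_eq_abs, abs_mul, abs_mul, abs_of_pos (c_pos n), abs_pow,
    abs_of_nonneg (by positivity : (0:ℝ) ≤ (n:ℝ)+1/2)]
  have h1 : c n * ((n:ℝ)+1/2) ≤ 1 * ((n:ℝ)+1) := by
    apply mul_le_mul (c_le_one n) (by linarith) (by positivity) zero_le_one
  calc c n * ((n:ℝ)+1/2) * |x|^n ≤ (1*((n:ℝ)+1)) * |x|^n :=
        mul_le_mul_of_nonneg_right h1 (by positivity)
    _ = ((n:ℝ)+1) * |x|^n := by ring

lemma summable_n {x : ℝ} (hx : |x| < 1) :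
    Summable (fun n => c n * (n:ℝ) * x^n) := by
  apply Summable.of_norm_bounded (summable_np1_geom (abs_nonneg x) hx)
  intro n
  rw [Real.norm_eq_abs, abs_mul, abs_mul, abs_of_pos (c_pos n), abs_pow,
    abs_of_nonneg (n.cast_nonneg : (0:ℝ) ≤ (n:ℝ))]
  have h1 : c n * (n:ℝ) ≤ 1 * ((n:ℝ)+1) := by
    apply mul_le_mul (c_le_one n) (by linarith) (by positivity) zero_le_one
  calc c n * (n:ℝ) * |x|^n ≤ (1*((n:ℝ)+1)) * |x|^n :=
        mul_le_mul_of_nonneg_right h1 (by positivity)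
    _ = ((n:ℝ)+1) * |x|^n := by ring

lemma c_succ' (n : ℕ) : c (n+1) * ((n:ℝ)+1) = c n * ((n:ℝ)+1/2) := by
  rw [c_succ]
  have h : ((n:ℝ)+1) ≠ 0 := by positivity
  field_simp

lemma key {x : ℝ} (hx : |x| < 1) : (1 - x) * D x = (1/2) * f x := by
  have hD : Summable (fun n => c n * ((n:ℝ) * x ^ (n-1))) :=
    summable_cD (r := (1+|x|)/2) (by linarith) (by linarith)
      (by positivity)
  have hhalf := summable_half hx
  have hn := summable_n hx
  have habs0 := abs_nonneg x
  -- D x = ∑' n, c n * (n + 1/2) * x^n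
  have hD1 : D x = ∑' n, c n * ((n:ℝ)+1/2) * x^n := by
    rw [D, Summable.tsum_eq_zero_add hD]
    simp only [Nat.cast_zero, zero_mul, mul_zero, zero_add]
    apply tsum_congr
    intro n
    have : ((n:ℕ)+1) - 1 = n := rfl
    rw [this]
    push_cast
    calc c (n+1) * (((n:ℝ)+1) * x ^ n) = (c (n+1) * ((n:ℝ)+1)) * x^n := by ring
      _ = c n * ((n:ℝ)+1/2) * x^n := by rw [c_succ']
  -- x * D x = ∑' n, c n * n * x^n
  have hD2 : x * D x = ∑' n, c n * (n:ℝ) * x^n := by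
    rw [hD1, ← tsum_mul_left]
    rw [Summable.tsum_eq_zero_add hn]
    simp only [Nat.cast_zero, mul_zero, zero_mul, zero_add]
    apply tsum_congr
    intro n
    push_cast
    calc x * (c n * ((n:ℝ)+1/2) * x^n) = (c (n+1) * ((n:ℝ)+1)) * x^(n+1) := by
          rw [c_succ']; ring
      _ = c (n+1) * ((n:ℝ)+1) * x^(n+1) := by ring
  rw [sub_mul, one_mul, hD2, hD1, ← Summable.tsum_sub hhalf hn]
  rw [f, ← tsum_mul_left]
  apply tsum_congr
  intro n
  ring


lemma f_zero : f 0 = 1 := by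
  rw [f, tsum_eq_single 0]
  · simp [c_zero]
  · intro n hn
    rw [zero_pow hn, mul_zero]

lemma f_nonneg {x : ℝ} (hx0 : 0 ≤ x) : 0 ≤ f x := by
  apply tsum_nonneg
  intro n
  have := c_pos n
  positivity

lemma f_sq {x : ℝ} (hx0 : 0 ≤ x) (hx : x < 1) : f x ^ 2 * (1 - x) = 1 := by
  have main : ∀ y ∈ Set.Icc (0:ℝ) x, f y ^ 2 * (1 - y) = f 0 ^ 2 * (1 - 0) := by
    apply constant_of_has_deriv_right_zero
    · intro y hy
      have hy1 : |y| < 1 := by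
        rw [abs_lt]; exact ⟨by linarith [hy.1], by linarith [hy.2]⟩
      have hfc : ContinuousAt f y := (hasDerivAt_f hy1).continuousAt
      exact (((hfc.pow 2).mul (continuousAt_const.sub continuousAt_id))).continuousWithinAt
    · intro y hy
      have hy1 : |y| < 1 := by
        rw [abs_lt]; exact ⟨by linarith [hy.1], by linarith [hy.2]⟩
      have hd : HasDerivAt (fun z => f z ^ 2 * (1 - z))
          ((2 * f y ^ 1 * D y) * (1 - y) + f y ^ 2 * (0 - 1)) y := by
        exact ((hasDerivAt_f hy1).pow 2).mul ((hasDerivAt_const y (1:ℝ)).sub (hasDerivAt_id y))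
      have hzero : (2 * f y ^ 1 * D y) * (1 - y) + f y ^ 2 * (0 - 1) = 0 := by
        have k := key hy1
        have : f y ^ 1 = f y := pow_one _
        rw [this]
        linear_combination (2 * f y) * k
      rw [hzero] at hd
      exact hd.hasDerivWithinAt
  have := main x ⟨hx0, le_refl x⟩
  rw [f_zero] at this
  rw [this]; norm_num

lemma f_eq {x : ℝ} (hx0 : 0 ≤ x) (hx : x < 1) : f x = 1 / Real.sqrt (1 - x) := by
  have h1 : (0:ℝ) < 1 - x := by linarith
  have h2 : f x ^ 2 = (1-x)⁻¹ := by
    have := f_sq hx0 hx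
    field_simp
    linarith [this]
  rw [← Real.sqrt_sq (f_nonneg hx0), h2, Real.sqrt_inv, one_div]


lemma min_bound {a : ℝ} (ha : 0 < a) (n : ℕ) : min a 1 * ((n:ℝ)+1) ≤ a + n := by
  have h1 : min a 1 ≤ a := min_le_left _ _
  have h2 : min a 1 ≤ 1 := min_le_right _ _
  have h3 : (0:ℝ) ≤ n := n.cast_nonneg
  nlinarith

lemma summable_inv_sq {a : ℝ} (ha : 0 < a) : Summable (fun n : ℕ => c n / (a+n)^2) := by
  have hm : 0 < min a 1 := lt_min ha one_pos
  have hbase : Summable (fun n : ℕ => 1/((n:ℝ)+1)^2) := by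
    have h0 : Summable (fun n : ℕ => 1/((n:ℝ))^2) :=
      Real.summable_one_div_nat_pow.mpr one_lt_two
    have := (summable_nat_add_iff 1).mpr h0
    apply this.congr
    intro n; push_cast; ring
  apply Summable.of_nonneg_of_le _ _ (hbase.mul_left ((min a 1)^2)⁻¹)
  · intro n
    have h1 : (0:ℝ) < a + n := by positivity
    have := (c_pos n).le
    positivity
  · intro n
    have h1 : (0:ℝ) < a + n := by positivity
    have h2 : min a 1 * ((n:ℝ)+1) ≤ a + n := min_bound ha n
    have h3 : (0:ℝ) < (n:ℝ)+1 := by positivity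
    have h4 : (min a 1 * ((n:ℝ)+1))^2 ≤ (a+n)^2 := by
      apply pow_le_pow_left₀ (by positivity) h2
    calc c n / (a+n)^2 ≤ 1 / (min a 1 * ((n:ℝ)+1))^2 := by
          apply div_le_div₀ (by norm_num) (c_le_one n) (by positivity) h4
      _ = ((min a 1)^2)⁻¹ * (1/((n:ℝ)+1)^2) := by
          rw [mul_pow]; field_simp

lemma summable_inv {a : ℝ} (ha : 0 < a) : Summable (fun n : ℕ => c n / (a+n)) := by
  have hm : 0 < min a 1 := lt_min ha one_pos
  have hbase : Summable (fun n : ℕ => 1/((n:ℝ)+1)^((3:ℝ)/2)) := by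
    have h0 : Summable (fun n : ℕ => 1/((n:ℝ))^((3:ℝ)/2)) :=
      Real.summable_one_div_nat_rpow.mpr (by norm_num)
    have := (summable_nat_add_iff 1).mpr h0
    apply this.congr
    intro n; push_cast; ring_nf
  apply Summable.of_nonneg_of_le _ _ (hbase.mul_left (min a 1)⁻¹)
  · intro n
    have h1 : (0:ℝ) < a + n := by positivity
    have := (c_pos n).le
    positivity
  · intro n
    have h1 : (0:ℝ) < a + n := by positivity
    have h3 : (0:ℝ) < (n:ℝ)+1 := by positivity
    have h2 : min a 1 * ((n:ℝ)+1) ≤ a + n := min_bound ha n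
    have hs : (0:ℝ) < Real.sqrt ((n:ℝ)+1) := Real.sqrt_pos.mpr h3
    have hr : ((n:ℝ)+1)^((3:ℝ)/2) = ((n:ℝ)+1) * Real.sqrt ((n:ℝ)+1) := by
      rw [show (3:ℝ)/2 = 1 + 1/2 by norm_num, Real.rpow_add h3, Real.rpow_one,
        ← Real.sqrt_eq_rpow]
    calc c n / (a+n) ≤ (1/Real.sqrt ((n:ℝ)+1)) / (min a 1 * ((n:ℝ)+1)) := by
          apply div_le_div₀ (by positivity) (c_le_inv_sqrt n) (by positivity) h2
      _ = (min a 1)⁻¹ * (1/((n:ℝ)+1)^((3:ℝ)/2)) := by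
          rw [hr]; field_simp


open MeasureTheory in
lemma swap_integral {a : ℝ} (ha : 0 < a) :
    ∑' n : ℕ, c n / (a + n) =
      ∫ x in Set.Ioc (0:ℝ) 1, x^(a-1) * (1-x)^(-(1/2):ℝ) := by
  have hint : ∀ n : ℕ, Integrable (fun x : ℝ => c n * x ^ ((n:ℝ)+a-1))
      (volume.restrict (Set.Ioc 0 1)) := by
    intro n
    have h1 : IntervalIntegrable (fun x : ℝ => x ^ ((n:ℝ)+a-1)) volume 0 1 :=
      intervalIntegral.intervalIntegrable_rpow' (by have : (0:ℝ) ≤ n := n.cast_nonneg; linarith)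
    rw [intervalIntegrable_iff_integrableOn_Ioc_of_le zero_le_one] at h1
    exact h1.const_mul _
  have hval : ∀ n : ℕ, ∫ x in Set.Ioc (0:ℝ) 1, c n * x ^ ((n:ℝ)+a-1) = c n / (a+n) := by
    intro n
    rw [MeasureTheory.integral_const_mul]
    rw [← intervalIntegral.integral_of_le zero_le_one]
    rw [integral_rpow (Or.inl (by have : (0:ℝ) ≤ n := n.cast_nonneg; linarith))]
    have hne : (n:ℝ) + a - 1 + 1 ≠ 0 := by have h0 : (0:ℝ) ≤ n := n.cast_nonneg; intro h; linarith [h]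
    rw [Real.one_rpow, Real.zero_rpow hne]
    rw [show (n:ℝ) + a - 1 + 1 = a + n by ring]
    ring
  have hnorm : ∀ n : ℕ, (∫ x in Set.Ioc (0:ℝ) 1, ‖c n * x ^ ((n:ℝ)+a-1)‖) = c n / (a+n) := by
    intro n
    rw [← hval n]
    apply setIntegral_congr_fun measurableSet_Ioc
    intro x hx
    have h0 : 0 ≤ c n * x ^ ((n:ℝ)+a-1) :=
      mul_nonneg (c_pos n).le (Real.rpow_nonneg hx.1.le _)
    exact Real.norm_of_nonneg h0
  have hsum : Summable (fun n : ℕ => ∫ x in Set.Ioc (0:ℝ) 1, ‖c n * x ^ ((n:ℝ)+a-1)‖) := by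
    rw [funext hnorm]
    exact summable_inv ha
  have hswap := MeasureTheory.integral_tsum_of_summable_integral_norm hint hsum
  rw [funext hval] at hswap
  rw [hswap]
  rw [MeasureTheory.integral_Ioc_eq_integral_Ioo, MeasureTheory.integral_Ioc_eq_integral_Ioo]
  apply setIntegral_congr_fun measurableSet_Ioo
  intro x hx
  have hx0 : 0 < x := hx.1
  have hx1 : x < 1 := hx.2
  have h1x : (0:ℝ) < 1 - x := by linarith
  have hterm : ∀ n : ℕ, c n * x ^ ((n:ℝ)+a-1) = (c n * x ^ n) * x ^ (a-1) := by
    intro n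
    rw [show (n:ℝ)+a-1 = (n:ℝ) + (a-1) by ring, Real.rpow_add hx0,
      Real.rpow_natCast]
    ring
  show ∑' n : ℕ, c n * x ^ ((n:ℝ)+a-1) = x^(a-1) * (1-x)^(-(1/2):ℝ)
  rw [tsum_congr hterm, tsum_mul_right]
  have hf : (∑' n : ℕ, c n * x ^ n) = f x := rfl
  rw [hf, f_eq hx0.le hx1]
  rw [Real.rpow_neg h1x.le, ← Real.sqrt_eq_rpow]
  field_simp


open MeasureTheory in
lemma beta_gamma {a : ℝ} (ha : 0 < a) :
    ∫ x in Set.Ioc (0:ℝ) 1, x^(a-1) * (1-x)^(-(1/2):ℝ) =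
      Real.sqrt π * Real.Gamma a / Real.Gamma (a + 1/2) := by
  have hbeta := Complex.Gamma_mul_Gamma_eq_betaIntegral (s := (a:ℂ)) (t := (1/2 : ℂ))
    (by simpa using ha) (by norm_num)
  have hofreal : Complex.betaIntegral (a:ℂ) (1/2) =
      ((∫ x in Set.Ioc (0:ℝ) 1, x^(a-1) * (1-x)^(-(1/2):ℝ) : ℝ) : ℂ) := by
    rw [Complex.betaIntegral, intervalIntegral.integral_of_le zero_le_one]
    have step : ∫ x in Set.Ioc (0:ℝ) 1, (x:ℂ) ^ ((a:ℂ) - 1) * (1 - (x:ℂ)) ^ ((1/2:ℂ) - 1) =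
        ∫ x in Set.Ioc (0:ℝ) 1, (((x ^ (a-1) * (1-x)^(-(1/2):ℝ) : ℝ)) : ℂ) := by
      apply setIntegral_congr_fun measurableSet_Ioc
      intro x hx
      have hx0 : (0:ℝ) ≤ x := hx.1.le
      have hx1 : (0:ℝ) ≤ 1 - x := by linarith [hx.2]
      have e1 : (x:ℂ) ^ ((a:ℂ) - 1) = ((x ^ (a-1) : ℝ) : ℂ) := by
        rw [Complex.ofReal_cpow hx0]
        push_cast
        rfl
      have e2 : (1 - (x:ℂ)) ^ ((1/2 : ℂ) - 1) = (((1-x) ^ (-(1/2):ℝ) : ℝ) : ℂ) := by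
        rw [show ((1:ℂ) - x) = (((1-x : ℝ)):ℂ) by push_cast; ring]
        rw [Complex.ofReal_cpow hx1]
        norm_num
      simp only [e1, e2]
      push_cast
      ring
    rw [step]
    exact integral_ofReal
  rw [hofreal] at hbeta
  rw [show (a:ℂ) + 1/2 = (((a + 1/2 : ℝ)):ℂ) by push_cast; ring] at hbeta
  rw [Complex.Gamma_ofReal, Complex.Gamma_ofReal] at hbeta
  rw [show ((1:ℂ)/2) = (((1/2 : ℝ)):ℂ) by push_cast; ring, Complex.Gamma_ofReal] at hbeta
  rw [← Complex.ofReal_mul, ← Complex.ofReal_mul, Complex.ofReal_inj] at hbeta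
  have hpos : 0 < Real.Gamma (a + 1/2) := Real.Gamma_pos_of_pos (by linarith)
  rw [Real.Gamma_one_half_eq] at hbeta
  rw [eq_div_iff hpos.ne']
  linarith [hbeta]


noncomputable def FF (a : ℝ) : ℝ := ∑' n : ℕ, c n / (a + n)

noncomputable def GG (a : ℝ) : ℝ := Real.sqrt π * Real.Gamma a / Real.Gamma (a + 1/2)

lemma FF_eq {a : ℝ} (ha : 0 < a) : FF a = GG a := by
  rw [FF, GG, swap_integral ha, beta_gamma ha]

lemma Gamma_diff {x : ℝ} (hx : 0 < x) : DifferentiableAt ℝ Real.Gamma x := by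
  apply Real.differentiableAt_Gamma
  intro m
  have : -(m:ℝ) ≤ 0 := neg_nonpos.mpr m.cast_nonneg
  exact ne_of_gt (lt_of_le_of_lt this hx)

lemma hasDerivAt_FF :
    HasDerivAt FF (-∑' n : ℕ, c n / (1/4 + (n:ℝ))^2) (1/4 : ℝ) := by
  have hFF : FF = (fun z : ℝ => ∑' n : ℕ, c n * ((z + (n:ℝ))⁻¹)) :=
    funext fun z => tsum_congr fun n => div_eq_mul_inv _ _
  have H : HasDerivAt (fun z : ℝ => ∑' n : ℕ, c n * ((z + (n:ℝ))⁻¹))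
      (∑' n : ℕ, (c n * (-1 / ((1/4 : ℝ) + n)^2))) (1/4 : ℝ) := by
    refine hasDerivAt_tsum_of_isPreconnected
      (u := fun n : ℕ => c n / ((1/8 : ℝ) + n)^2)
      (t := Set.Ioi (1/8 : ℝ)) (y₀ := (1:ℝ))
      (g := fun (n : ℕ) (z : ℝ) => c n * ((z + (n:ℝ))⁻¹))
      (g' := fun (n : ℕ) (y : ℝ) => c n * (-1 / (y + (n:ℝ))^2))
      (summable_inv_sq (by norm_num)) isOpen_Ioi isPreconnected_Ioi
      ?_ ?_ (by norm_num) ?_ (by norm_num)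
    · intro n y hy
      have hyn : (0:ℝ) < y + n := by
        have : (0:ℝ) ≤ n := n.cast_nonneg
        have := hy.out
        simp only [Set.mem_Ioi] at hy
        linarith
      have h1 : HasDerivAt (fun z : ℝ => z + (n:ℝ)) 1 y := (hasDerivAt_id y).add_const _
      have h2 := h1.inv hyn.ne'
      have h3 := h2.const_mul (c n)
      exact h3
    · intro n y hy
      simp only [Set.mem_Ioi] at hy
      have hn : (0:ℝ) ≤ n := n.cast_nonneg
      have hyn : (0:ℝ) < y + n := by linarith
      have h8 : (0:ℝ) < 1/8 + n := by linarith
      rw [Real.norm_eq_abs, abs_mul, abs_of_pos (c_pos n), abs_div, abs_neg, abs_one,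
        abs_of_pos (by positivity : (0:ℝ) < (y+n)^2)]
      rw [mul_one_div, div_le_div_iff₀ (by positivity) (by positivity)]
      have : (1/8 + (n:ℝ))^2 ≤ (y + n)^2 := by nlinarith
      nlinarith [(c_pos n).le]
    · apply (summable_inv (a := 1) one_pos).congr
      intro n
      rw [div_eq_mul_inv]
  rw [hFF]
  convert H using 1
  rw [← tsum_neg]
  apply tsum_congr
  intro n
  have h : (0:ℝ) < 1/4 + n := by have : (0:ℝ) ≤ n := n.cast_nonneg; linarith
  field_simp

lemma hasDerivAt_GG :
    HasDerivAt GG ((Real.sqrt π * deriv Real.Gamma (1/4) * Real.Gamma (3/4)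
      - Real.sqrt π * Real.Gamma (1/4) * deriv Real.Gamma (3/4)) / Real.Gamma (3/4)^2)
      (1/4 : ℝ) := by
  have h1 : HasDerivAt Real.Gamma (deriv Real.Gamma (1/4)) (1/4 : ℝ) :=
    (Gamma_diff (by norm_num)).hasDerivAt
  have h2 : HasDerivAt (fun y : ℝ => Real.Gamma (y + 1/2)) (deriv Real.Gamma (3/4)) (1/4 : ℝ) := by
    have hin : HasDerivAt (fun y : ℝ => y + 1/2) 1 (1/4 : ℝ) := (hasDerivAt_id _).add_const _
    have hout : HasDerivAt Real.Gamma (deriv Real.Gamma ((1:ℝ)/4 + 1/2)) ((1:ℝ)/4 + 1/2) := by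
      rw [show (1:ℝ)/4 + 1/2 = 3/4 by norm_num]
      exact (Gamma_diff (by norm_num)).hasDerivAt
    have h5 := hout.comp (1/4 : ℝ) hin
    rw [show (1:ℝ)/4 + 1/2 = 3/4 by norm_num, mul_one] at h5
    exact h5
  have h3 := (h1.const_mul (Real.sqrt π)).div h2
    (by rw [show (1:ℝ)/4 + 1/2 = 3/4 by norm_num]
        exact (Real.Gamma_pos_of_pos (by norm_num)).ne')
  simp only [show (1:ℝ)/4 + 1/2 = 3/4 by norm_num] at h3
  exact h3

lemma deriv_combo :
    deriv Real.Gamma (1/4) * Real.Gamma (3/4) - Real.Gamma (1/4) * deriv Real.Gamma (3/4)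
      = -(Real.sqrt 2) * π^2 := by
  have h1 : HasDerivAt Real.Gamma (deriv Real.Gamma (1/4)) (1/4 : ℝ) :=
    (Gamma_diff (by norm_num)).hasDerivAt
  have hB : HasDerivAt (fun s : ℝ => Real.Gamma (1 - s)) (-(deriv Real.Gamma (3/4))) (1/4 : ℝ) := by
    have hin : HasDerivAt (fun s : ℝ => 1 - s) (-1) (1/4 : ℝ) := (hasDerivAt_id _).const_sub 1
    have hout : HasDerivAt Real.Gamma (deriv Real.Gamma (1 - (1:ℝ)/4)) (1 - (1:ℝ)/4) := by
      rw [show 1 - (1:ℝ)/4 = 3/4 by norm_num]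
      exact (Gamma_diff (by norm_num)).hasDerivAt
    have h5 := hout.comp (1/4 : ℝ) hin
    rw [show 1 - (1:ℝ)/4 = 3/4 by norm_num, mul_neg_one] at h5
    exact h5
  have hL := h1.mul hB
  have hsin : HasDerivAt (fun s : ℝ => Real.sin (π * s)) (Real.cos (π * (1/4)) * π) (1/4 : ℝ) := by
    have hin : HasDerivAt (fun s : ℝ => π * s) π (1/4 : ℝ) := by
      simpa using (hasDerivAt_id (1/4 : ℝ)).const_mul π
    exact (Real.hasDerivAt_sin (π * (1/4))).comp _ hin
  have hsin4 : Real.sin (π * (1/4)) = Real.sqrt 2 / 2 := by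
    rw [show π * (1/4 : ℝ) = π/4 by ring, Real.sin_pi_div_four]
  have hcos4 : Real.cos (π * (1/4)) = Real.sqrt 2 / 2 := by
    rw [show π * (1/4 : ℝ) = π/4 by ring, Real.cos_pi_div_four]
  have hsne : Real.sin (π * (1/4)) ≠ 0 := by
    rw [hsin4]; positivity
  have hR := (hasDerivAt_const (1/4 : ℝ) π).div hsin hsne
  have hfun : (fun s : ℝ => Real.Gamma s * Real.Gamma (1 - s)) =
      (fun s : ℝ => π / Real.sin (π * s)) := funext Real.Gamma_mul_Gamma_one_sub
  rw [show (Real.Gamma * fun s => Real.Gamma (1 - s)) = fun s : ℝ => Real.Gamma s * Real.Gamma (1 - s) from rfl, hfun] at hL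
  have heq := hL.unique hR
  rw [hsin4, hcos4, show 1 - (1:ℝ)/4 = 3/4 by norm_num] at heq
  have h2 : Real.sqrt 2 * Real.sqrt 2 = 2 := Real.mul_self_sqrt (by norm_num)
  have hs2 : (0:ℝ) < Real.sqrt 2 := by positivity
  field_simp at heq
  nlinarith [heq, sq_nonneg π]


lemma T_val : ∑' n : ℕ, c n / (1/4 + (n:ℝ))^2
    = Real.sqrt 2 * π^2 * Real.sqrt π / Real.Gamma (3/4)^2 := by
  have hev : FF =ᶠ[nhds (1/4 : ℝ)] GG := by
    apply Filter.eventuallyEq_of_mem (Ioi_mem_nhds (by norm_num : (0:ℝ) < 1/4))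
    intro a ha
    exact FF_eq ha
  have hFF2 : HasDerivAt FF ((Real.sqrt π * deriv Real.Gamma (1/4) * Real.Gamma (3/4)
      - Real.sqrt π * Real.Gamma (1/4) * deriv Real.Gamma (3/4)) / Real.Gamma (3/4)^2)
      (1/4 : ℝ) := hasDerivAt_GG.congr_of_eventuallyEq hev
  have heq := hasDerivAt_FF.unique hFF2
  have hnum : Real.sqrt π * deriv Real.Gamma (1/4) * Real.Gamma (3/4)
      - Real.sqrt π * Real.Gamma (1/4) * deriv Real.Gamma (3/4)
      = Real.sqrt π * (-(Real.sqrt 2) * π^2) := by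
    linear_combination Real.sqrt π * deriv_combo
  rw [hnum] at heq
  have hB : (0:ℝ) < Real.Gamma (3/4) := Real.Gamma_pos_of_pos (by norm_num)
  have hB2 : Real.Gamma (3/4)^2 ≠ 0 := by positivity
  field_simp at heq ⊢
  have hcomm : (∑' (n : ℕ), c n * 4 ^ 2 / (1 + 4 * (n:ℝ)) ^ 2) = ∑' (n : ℕ), 4 ^ 2 * c n / (1 + 4 * (n:ℝ)) ^ 2 :=
    tsum_congr fun n => by ring
  rw [hcomm] at heq
  linarith [heq]

theorem final : ∑' n : ℕ, (poch (1/2) n / n.factorial) * (1 / (4 * (n : ℝ) + 1) ^ 2) =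
      π ^ ((5 : ℝ)/2) / (8 * Real.sqrt 2 * Real.Gamma (3/4) ^ 2) := by
  have hterm : ∀ n : ℕ, (poch (1/2) n / n.factorial) * (1 / (4 * (n : ℝ) + 1) ^ 2)
      = 1/16 * (c n / (1/4 + (n:ℝ))^2) := by
    intro n
    have hc : poch (1/2) n / (n.factorial : ℝ) = c n := rfl
    rw [hc]
    have hn : (0:ℝ) ≤ n := n.cast_nonneg
    have h1 : (4*(n:ℝ)+1) ≠ 0 := by positivity
    have h2 : ((1:ℝ)/4+(n:ℝ)) ≠ 0 := by positivity
    field_simp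
    ring
  rw [tsum_congr hterm, tsum_mul_left, T_val]
  have hrpow : π ^ ((5:ℝ)/2) = π^2 * Real.sqrt π := by
    rw [show (5:ℝ)/2 = ((2:ℕ):ℝ) + (1/2:ℝ) by norm_num, Real.rpow_add Real.pi_pos,
      Real.rpow_natCast, Real.sqrt_eq_rpow]
  rw [hrpow]
  have h2 : Real.sqrt 2 * Real.sqrt 2 = 2 := Real.mul_self_sqrt (by norm_num)
  have hB : (0:ℝ) < Real.Gamma (3/4) := Real.Gamma_pos_of_pos (by norm_num)
  have hs2 : (0:ℝ) < Real.sqrt 2 := by positivity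
  have hsp : (0:ℝ) ≤ Real.sqrt π := Real.sqrt_nonneg _
  have hBne : Real.Gamma (3/4)^2 ≠ 0 := by positivity
  field_simp
  linear_combination 8 * h2

end Aux

theorem stmt1 :
    ∑' n : ℕ, (poch (1/2) n / n.factorial) * (1 / (4 * (n : ℝ) + 1) ^ 2) =
      π ^ ((5 : ℝ)/2) / (8 * Real.sqrt 2 * Real.Gamma (3/4) ^ 2) := Aux.final
end

section
/- The series 1 + (1/5)(1/2) + (1/9)((1·3)/(2·4)) + ··· , i.e. ∑_{n=0}^∞ ((1/2)_n / n!) · 1/(4n+1), equals π^{3/2} / (2√2 Γ(3/4)^2). -/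
open Real BigOperators

noncomputable def aa (n : ℕ) : ℝ := poch (1/2) n / n.factorial

lemma aa_zero : aa 0 = 1 := by simp [aa, poch]

lemma aa_succ (n : ℕ) : aa (n+1) * (n+1) = aa n * (n + 1/2) := by
  have h1 : poch (1/2) (n+1) = poch (1/2) n * (1/2 + n) := Finset.prod_range_succ _ _
  have h2 : ((n+1).factorial : ℝ) = (n.factorial : ℝ) * (n+1) := by
    rw [Nat.factorial_succ]; push_cast; ring
  have hf : (n.factorial : ℝ) ≠ 0 := Nat.cast_ne_zero.2 n.factorial_ne_zero
  have hn : ((n:ℝ)+1) ≠ 0 := by positivity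
  unfold aa; rw [h1, h2]
  field_simp [aa, h1, h2]
  ring

lemma aa_nonneg (n : ℕ) : 0 ≤ aa n := by
  apply div_nonneg _ (Nat.cast_nonneg _)
  apply Finset.prod_nonneg
  intro i _; positivity

lemma aa_le_one (n : ℕ) : aa n ≤ 1 := by
  induction n with
  | zero => simp [aa_zero]
  | succ n ih =>
    have h := aa_succ n
    have hn : (0:ℝ) < n + 1 := by positivity
    have : aa (n+1) = aa n * (n + 1/2) / (n+1) := by
      field_simp at h ⊢; linarith [h]
    rw [this]
    rw [div_le_one hn]
    calc aa n * (n + 1/2) ≤ 1 * (n+1) := by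
          apply mul_le_mul ih (by linarith) (by positivity) one_pos.le
      _ = n + 1 := one_mul _

lemma summable_u {r : ℝ} (h0 : 0 ≤ r) (hr : r < 1) :
    Summable (fun n : ℕ => (n:ℝ) * r^(n-1)) := by
  rw [← summable_nat_add_iff 1]
  have : (fun n : ℕ => ((n+1:ℕ):ℝ) * r^((n+1)-1)) = fun n : ℕ => ((n:ℝ)^1) * r^n + r^n := by
    funext n; push_cast; simp; ring
  rw [this]
  exact (summable_pow_mul_geometric_of_norm_lt_one 1 (by rwa [Real.norm_eq_abs, abs_of_nonneg h0])).add
    (summable_geometric_of_lt_one h0 hr)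

lemma summable_P {t : ℝ} (ht : |t| < 1) : Summable (fun n : ℕ => aa n * t^n) := by
  apply Summable.of_norm_bounded (summable_geometric_of_lt_one (abs_nonneg t) ht)
  intro n
  rw [norm_mul, norm_pow, Real.norm_eq_abs, Real.norm_eq_abs,
    abs_of_nonneg (aa_nonneg n)]
  calc aa n * |t|^n ≤ 1 * |t|^n := by
        apply mul_le_mul_of_nonneg_right (aa_le_one n) (by positivity)
    _ = |t|^n := one_mul _

lemma summable_Q {t r : ℝ} (htr : |t| ≤ r) (hr : r < 1) :
    Summable (fun n : ℕ => aa n * ((n:ℝ) * t^(n-1))) := by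
  have h0 : 0 ≤ r := le_trans (abs_nonneg t) htr
  apply Summable.of_norm_bounded (summable_u h0 hr)
  intro n
  rw [norm_mul, norm_mul, Real.norm_eq_abs, Real.norm_eq_abs, Real.norm_eq_abs,
    abs_of_nonneg (aa_nonneg n), abs_of_nonneg (Nat.cast_nonneg n), abs_pow]
  calc aa n * ((n:ℝ) * |t|^(n-1)) ≤ 1 * ((n:ℝ) * r^(n-1)) := by
        apply mul_le_mul (aa_le_one n) _ (by positivity) one_pos.le
        exact mul_le_mul_of_nonneg_left (pow_le_pow_left₀ (abs_nonneg t) htr _) (Nat.cast_nonneg n)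
    _ = (n:ℝ) * r^(n-1) := one_mul _
open Real BigOperators

lemma ode_id {t : ℝ} (ht : |t| < 1) :
    2 * (1-t) * ∑' n : ℕ, aa n * ((n:ℝ) * t^(n-1)) = ∑' n : ℕ, aa n * t^n := by
  have hQ := summable_Q le_rfl ht
  have hP := summable_P ht
  have htQ : ∀ n : ℕ, t * (aa n * ((n:ℝ) * t^(n-1))) = aa n * ((n:ℝ) * t^n) := by
    intro n
    cases n with
    | zero => simp
    | succ m => simp only [Nat.add_sub_cancel, pow_succ]; ring
  have hQ2 : Summable (fun n : ℕ => aa n * ((n:ℝ) * t^n)) := (hQ.mul_left t).congr htQ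
  have hshift : Summable (fun n : ℕ => aa (n+1) * (((n:ℝ)+1) * t^n)) := by
    have := (summable_nat_add_iff 1).2 hQ
    apply this.congr
    intro n; simp only [Nat.add_sub_cancel]; push_cast; ring
  have step1 : ∑' n : ℕ, aa n * ((n:ℝ) * t^(n-1)) = ∑' n : ℕ, aa (n+1) * (((n:ℝ)+1) * t^n) := by
    rw [Summable.tsum_eq_zero_add hQ]
    simp only [Nat.cast_zero, zero_mul, mul_zero, zero_add, Nat.add_sub_cancel]
    apply tsum_congr; intro n; push_cast; ring
  have step2 : t * ∑' n : ℕ, aa n * ((n:ℝ) * t^(n-1)) = ∑' n : ℕ, aa n * ((n:ℝ) * t^n) := by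
    rw [← tsum_mul_left]
    exact tsum_congr htQ
  have expand : 2 * (1-t) * ∑' n : ℕ, aa n * ((n:ℝ) * t^(n-1))
      = 2 * ∑' n : ℕ, aa (n+1) * (((n:ℝ)+1) * t^n) - 2 * ∑' n : ℕ, aa n * ((n:ℝ) * t^n) := by
    rw [← step1, ← step2]; ring
  rw [expand, ← tsum_mul_left, ← tsum_mul_left, ← Summable.tsum_sub (hshift.mul_left 2) (hQ2.mul_left 2)]
  apply tsum_congr
  intro n
  linear_combination (2 * t^n) * aa_succ n
open Real BigOperators Set

lemma binom {t : ℝ} (h0 : 0 ≤ t) (h1 : t < 1) :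
    ∑' n : ℕ, aa n * t^n = (1-t) ^ (-(1/2) : ℝ) := by
  set r : ℝ := (1+t)/2 with hr
  have hr1 : r < 1 := by rw [hr]; linarith
  have hrt : t < r := by rw [hr]; linarith
  have hr0 : 0 < r := by rw [hr]; linarith
  set s : Set ℝ := Ioo (-r) r with hs
  set S : ℝ → ℝ := fun z => ∑' n : ℕ, aa n * z^n with hS
  have hderiv : ∀ y ∈ s, HasDerivAt S (∑' n : ℕ, aa n * ((n:ℝ) * y^(n-1))) y := by
    intro y hy
    exact hasDerivAt_tsum_of_isPreconnected (F := ℝ) (𝕜 := ℝ)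
      (g := fun (n : ℕ) (z : ℝ) => aa n * z^n)
      (g' := fun (n : ℕ) (z : ℝ) => aa n * ((n:ℝ) * z^(n-1)))
      (u := fun n : ℕ => (n:ℝ) * r^(n-1)) (y₀ := 0) (t := s)
      (summable_u hr0.le hr1) isOpen_Ioo isPreconnected_Ioo
      (fun n z _ => (hasDerivAt_pow n z).const_mul (aa n))
      (by
        intro n z hz
        have hzr : |z| ≤ r := by
          rw [abs_le]; exact ⟨(hz.1).le, (hz.2).le⟩
        rw [norm_mul, norm_mul, Real.norm_eq_abs, Real.norm_eq_abs, Real.norm_eq_abs,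
          abs_of_nonneg (aa_nonneg n), abs_of_nonneg (Nat.cast_nonneg n), abs_pow]
        calc aa n * ((n:ℝ) * |z|^(n-1)) ≤ 1 * ((n:ℝ) * r^(n-1)) := by
              apply mul_le_mul (aa_le_one n) _ (by positivity) one_pos.le
              exact mul_le_mul_of_nonneg_left (pow_le_pow_left₀ (abs_nonneg z) hzr _) (Nat.cast_nonneg n)
          _ = (n:ℝ) * r^(n-1) := one_mul _)
      (mem_Ioo.2 ⟨by linarith, hr0⟩)
      (summable_P (by rw [abs_zero]; exact one_pos))
      hy
  have hzero : ∀ y ∈ s, HasDerivAt (fun z => (1-z)^((1:ℝ)/2) * S z) 0 y := by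
    intro y hy
    simp only [hs, mem_Ioo] at hy
    have hy1 : (0:ℝ) < 1 - y := by linarith [hy.2]
    have hyabs : |y| < 1 := by rw [abs_lt]; constructor <;> [linarith [hy.1]; linarith [hy.2]]
    have hA : HasDerivAt (fun z : ℝ => (1-z)^((1:ℝ)/2)) ((-1) * ((1:ℝ)/2) * (1-y)^((1:ℝ)/2 - 1)) y := by
      have hd : HasDerivAt (fun z : ℝ => 1 - z) (-1) y := by
        simpa using ((hasDerivAt_id y).const_sub 1)
      exact hd.rpow_const (Or.inl hy1.ne')
    have hB := hderiv y (by rw [hs, mem_Ioo]; exact hy)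
    have hmul := hA.mul hB
    refine hmul.congr_deriv ?_
    symm
    have hode := ode_id hyabs
    set D := ∑' n : ℕ, aa n * ((n:ℝ) * y^(n-1))
    have hSval : S y = 2 * (1-y) * D := hode.symm
    rw [hSval]
    have e1 : (1-y)^((1:ℝ)/2 - 1) * (1-y) = (1-y)^((1:ℝ)/2) := by
      have h := Real.rpow_add hy1 ((1:ℝ)/2 - 1) 1
      rw [Real.rpow_one] at h
      rw [← h]; norm_num
    linear_combination D * e1
  -- constancy on [0, t]
  have hsub : Icc (0:ℝ) t ⊆ s := by
    intro x hx
    rw [hs, mem_Ioo]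
    exact ⟨by linarith [hx.1], by linarith [hx.2]⟩
  have hcont : ContinuousOn (fun z => (1-z)^((1:ℝ)/2) * S z) (Icc 0 t) :=
    fun x hx => ((hzero x (hsub hx)).continuousAt).continuousWithinAt
  have hconst := constant_of_has_deriv_right_zero hcont
    (fun x hx => ((hzero x (hsub (mem_Icc_of_Ico hx))).hasDerivWithinAt)) t
    (mem_Icc.2 ⟨h0, le_refl t⟩)
  -- compute values
  have hS0 : S 0 = 1 := by
    rw [hS]
    simp only
    rw [tsum_eq_single 0 (by intro n hn; simp [zero_pow hn])]
    simp [aa_zero]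
  rw [hS0] at hconst
  simp only [sub_zero, Real.one_rpow, mul_one] at hconst
  -- hconst : (1-t)^(1/2) * S t = 1
  have ht1 : (0:ℝ) < 1 - t := by linarith
  have hpow : (0:ℝ) < (1-t)^((1:ℝ)/2) := Real.rpow_pos_of_pos ht1 _
  have : S t = ((1-t)^((1:ℝ)/2))⁻¹ := by
    field_simp at hconst ⊢
    linarith [hconst]
  rw [hS] at this
  simp only at this
  rw [this, Real.rpow_neg ht1.le]
open Real BigOperators Set MeasureTheory intervalIntegral

noncomputable def gg (x : ℝ) : ℝ := x ^ (-(3/4) : ℝ) * (1-x) ^ (-(1/2) : ℝ)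

lemma gg_interval_eq :
    (Complex.betaIntegral (1/4) (1/2)) = ((∫ x in (0:ℝ)..1, gg x : ℝ) : ℂ) := by
  rw [Complex.betaIntegral, ← intervalIntegral.integral_ofReal]
  apply intervalIntegral.integral_congr
  intro x hx
  rw [uIcc_of_le zero_le_one] at hx
  have hx0 : (0:ℝ) ≤ x := hx.1
  have hx1 : (0:ℝ) ≤ 1 - x := by linarith [hx.2]
  simp only [gg]
  push_cast
  rw [show ((1:ℂ)/4 - 1) = ((-(3/4):ℝ):ℂ) by norm_num,
    show ((1:ℂ)/2 - 1) = ((-(1/2):ℝ):ℂ) by norm_num,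
    show (1 - (x:ℂ)) = ((1-x:ℝ):ℂ) by push_cast; ring,
    ← Complex.ofReal_cpow hx0, ← Complex.ofReal_cpow hx1]

lemma beta_val : ∫ x in (0:ℝ)..1, gg x
    = Real.Gamma (1/4) * Real.Gamma (1/2) / Real.Gamma (3/4) := by
  have h := Complex.Gamma_mul_Gamma_eq_betaIntegral
    (s := 1/4) (t := 1/2) (by norm_num [Complex.div_re]) (by norm_num [Complex.div_re])
  rw [gg_interval_eq] at h
  have h14 : ((1:ℂ)/4) = ((1/4 : ℝ) : ℂ) := by norm_num
  have h12 : ((1:ℂ)/2) = ((1/2 : ℝ) : ℂ) := by norm_num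
  have h34 : ((1:ℂ)/4 + 1/2) = ((3/4 : ℝ) : ℂ) := by norm_num
  rw [h14, h12] at h
  rw [show ((1/4:ℝ):ℂ) + ((1/2:ℝ):ℂ) = ((3/4 : ℝ) : ℂ) by norm_num] at h
  rw [Complex.Gamma_ofReal, Complex.Gamma_ofReal, Complex.Gamma_ofReal] at h
  have h' : Real.Gamma (1/4) * Real.Gamma (1/2)
      = Real.Gamma (3/4) * ∫ x in (0:ℝ)..1, gg x := by
    exact_mod_cast h
  have hpos : 0 < Real.Gamma (3/4) := Real.Gamma_pos_of_pos (by norm_num)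
  field_simp
  linarith [h']
open Real BigOperators Set MeasureTheory intervalIntegral

lemma gg_eq_complex {x : ℝ} (hx0 : 0 ≤ x) (hx1 : x ≤ 1) :
    (x:ℂ) ^ ((1:ℂ)/4 - 1) * (1 - (x:ℂ)) ^ ((1:ℂ)/2 - 1) = ((gg x : ℝ) : ℂ) := by
  have hx1' : (0:ℝ) ≤ 1 - x := by linarith
  simp only [gg]
  rw [show ((1:ℂ)/4 - 1) = ((-(3/4):ℝ):ℂ) by norm_num,
    show ((1:ℂ)/2 - 1) = ((-(1/2):ℝ):ℂ) by norm_num,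
    show (1 - (x:ℂ)) = ((1-x:ℝ):ℂ) by push_cast; ring,
    ← Complex.ofReal_cpow hx0, ← Complex.ofReal_cpow hx1']
  push_cast
  ring

lemma gg_integrable : IntegrableOn gg (Ioo (0:ℝ) 1) volume := by
  have h := Complex.betaIntegral_convergent
    (u := 1/4) (v := 1/2) (by norm_num [Complex.div_re]) (by norm_num [Complex.div_re])
  rw [intervalIntegrable_iff_integrableOn_Ioc_of_le zero_le_one] at h
  have h2 : IntegrableOn (fun x : ℝ => ((gg x : ℝ) : ℂ)) (Ioc 0 1) volume := by
    apply h.congr_fun _ measurableSet_Ioc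
    intro x hx
    exact gg_eq_complex hx.1.le hx.2
  have h3 : IntegrableOn gg (Ioc (0:ℝ) 1) volume := by
    have := h2.re
    simp at this; exact this
  exact h3.mono_set Ioo_subset_Ioc_self

lemma int_gg_Ioo : ∫ x in Ioo (0:ℝ) 1, gg x
    = Real.Gamma (1/4) * Real.Gamma (1/2) / Real.Gamma (3/4) := by
  rw [← beta_val, intervalIntegral.integral_of_le zero_le_one,
    MeasureTheory.Measure.restrict_congr_set MeasureTheory.Ioo_ae_eq_Ioc]

lemma per_n (n : ℕ) : ∫ x in Ioo (0:ℝ) 1, aa n * x ^ ((n:ℝ) - 3/4)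
    = aa n * (1/((n:ℝ) + 1/4)) := by
  rw [MeasureTheory.integral_const_mul]
  congr 1
  rw [← MeasureTheory.integral_Ioc_eq_integral_Ioo,
    ← intervalIntegral.integral_of_le zero_le_one]
  have hn : (0:ℝ) ≤ n := Nat.cast_nonneg n
  rw [integral_rpow (Or.inl (by linarith))]
  rw [Real.one_rpow, Real.zero_rpow (by intro hc; linarith)]
  rw [show (n:ℝ) - 3/4 + 1 = (n:ℝ) + 1/4 by ring]
  ring

lemma per_n_integrable (n : ℕ) :
    IntegrableOn (fun x : ℝ => aa n * x ^ ((n:ℝ) - 3/4)) (Ioo (0:ℝ) 1) volume := by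
  have h : IntervalIntegrable (fun x : ℝ => x ^ ((n:ℝ) - 3/4)) volume 0 1 :=
    intervalIntegral.intervalIntegrable_rpow' (by
      have hn : (0:ℝ) ≤ n := Nat.cast_nonneg n; linarith)
  rw [intervalIntegrable_iff_integrableOn_Ioc_of_le zero_le_one] at h
  exact ((h.mono_set Ioo_subset_Ioc_self).const_mul (aa n))

lemma summable_F {x : ℝ} (hx : x ∈ Ioo (0:ℝ) 1) :
    Summable (fun n : ℕ => aa n * x ^ ((n:ℝ) - 3/4)) := by
  have habs : |x| < 1 := by rw [abs_of_pos hx.1]; exact hx.2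
  apply ((summable_P habs).mul_left (x ^ (-(3/4):ℝ))).congr
  intro n
  rw [show (n:ℝ) - 3/4 = (n:ℝ) + (-(3/4)) by ring, Real.rpow_add hx.1,
    Real.rpow_natCast]
  ring

lemma pointwise_gg {x : ℝ} (hx : x ∈ Ioo (0:ℝ) 1) :
    gg x = ∑' n : ℕ, aa n * x ^ ((n:ℝ) - 3/4) := by
  have hb := binom hx.1.le hx.2
  simp only [gg]
  rw [← hb, ← tsum_mul_left]
  apply tsum_congr
  intro n
  rw [show (n:ℝ) - 3/4 = (n:ℝ) + (-(3/4)) by ring, Real.rpow_add hx.1,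
    Real.rpow_natCast]
  ring
open Real BigOperators Set MeasureTheory

lemma swap_lemma : ENNReal.ofReal (∫ x in Ioo (0:ℝ) 1, gg x)
    = ∑' n : ℕ, ENNReal.ofReal (aa n * (1/((n:ℝ)+1/4))) := by
  have hnn : 0 ≤ᵐ[volume.restrict (Ioo (0:ℝ) 1)] gg := by
    filter_upwards [ae_restrict_mem measurableSet_Ioo] with x hx
    exact mul_nonneg (Real.rpow_nonneg hx.1.le _)
      (Real.rpow_nonneg (by linarith [hx.2]) _)
  rw [ofReal_integral_eq_lintegral_ofReal gg_integrable hnn]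
  have step : ∫⁻ x in Ioo (0:ℝ) 1, ENNReal.ofReal (gg x)
      = ∫⁻ x in Ioo (0:ℝ) 1, ∑' n : ℕ, ENNReal.ofReal (aa n * x ^ ((n:ℝ)-3/4)) := by
    apply lintegral_congr_ae
    filter_upwards [ae_restrict_mem measurableSet_Ioo] with x hx
    rw [pointwise_gg hx, ENNReal.ofReal_tsum_of_nonneg
      (fun n => mul_nonneg (aa_nonneg n) (Real.rpow_nonneg hx.1.le _)) (summable_F hx)]
  rw [step, MeasureTheory.lintegral_tsum (fun n => by fun_prop)]
  apply tsum_congr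
  intro n
  have hnn2 : 0 ≤ᵐ[volume.restrict (Ioo (0:ℝ) 1)]
      (fun x : ℝ => aa n * x ^ ((n:ℝ)-3/4)) := by
    filter_upwards [ae_restrict_mem measurableSet_Ioo] with x hx
    exact mul_nonneg (aa_nonneg n) (Real.rpow_nonneg hx.1.le _)
  rw [← ofReal_integral_eq_lintegral_ofReal (per_n_integrable n) hnn2, per_n n]

lemma tsum_c_val : (∑' n : ℕ, aa n * (1/((n:ℝ)+1/4)))
    = Real.Gamma (1/4) * Real.Gamma (1/2) / Real.Gamma (3/4) := by
  set c : ℕ → ℝ := fun n => aa n * (1/((n:ℝ)+1/4)) with hc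
  have cnn : ∀ n, 0 ≤ c n := by
    intro n
    have hn : (0:ℝ) ≤ n := Nat.cast_nonneg n
    apply mul_nonneg (aa_nonneg n)
    positivity
  have hswap := swap_lemma
  rw [int_gg_Ioo] at hswap
  have hne : (∑' n : ℕ, ENNReal.ofReal (c n)) ≠ ⊤ := by
    rw [← hswap]; exact ENNReal.ofReal_ne_top
  have hsum : Summable c := by
    have h := ENNReal.summable_toReal hne
    exact h.congr (fun n => ENNReal.toReal_ofReal (cnn n))
  have hrhs : 0 ≤ Real.Gamma (1/4) * Real.Gamma (1/2) / Real.Gamma (3/4) := by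
    have h1 := Real.Gamma_pos_of_pos (show (0:ℝ) < 1/4 by norm_num)
    have h2 := Real.Gamma_pos_of_pos (show (0:ℝ) < 1/2 by norm_num)
    have h3 := Real.Gamma_pos_of_pos (show (0:ℝ) < 3/4 by norm_num)
    positivity
  have heq : ENNReal.ofReal (∑' n, c n)
      = ENNReal.ofReal (Real.Gamma (1/4) * Real.Gamma (1/2) / Real.Gamma (3/4)) := by
    rw [ENNReal.ofReal_tsum_of_nonneg cnn hsum, hswap]
  exact (ENNReal.ofReal_eq_ofReal_iff (tsum_nonneg (fun n => cnn n)) hrhs).1 heq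
open Real BigOperators

theorem stmt2 :
    ∑' n : ℕ, (poch (1/2) n / n.factorial) * (1 / (4 * (n : ℝ) + 1)) =
      π ^ ((3 : ℝ)/2) / (2 * Real.sqrt 2 * Real.Gamma (3/4) ^ 2) := by
  have hterm : ∀ n : ℕ, (poch (1/2) n / n.factorial) * (1 / (4 * (n : ℝ) + 1))
      = (1/4) * (aa n * (1/((n:ℝ)+1/4))) := by
    intro n
    have hn : (0:ℝ) ≤ n := Nat.cast_nonneg n
    have h1 : (4 * (n:ℝ) + 1) ≠ 0 := by linarith
    have h2 : ((n:ℝ) + 1/4) ≠ 0 := by intro hc; linarith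
    rw [show (poch (1/2) n / n.factorial) = aa n from rfl]
    have h4 : (1:ℝ)/(4*(n:ℝ)+1) = (1/4) * (1/((n:ℝ)+1/4)) := by
      rw [div_mul_div_comm]
      congr 1
      · norm_num
      · ring
    rw [h4]
    ring
  rw [tsum_congr hterm, tsum_mul_left, tsum_c_val]
  -- algebra
  have hrefl := Real.Gamma_mul_Gamma_one_sub (1/4)
  rw [show (1:ℝ) - 1/4 = 3/4 by norm_num, show π * (1/4) = π/4 by ring,
    Real.sin_pi_div_four] at hrefl
  have h12 : Real.Gamma (1/2) = Real.sqrt π := Real.Gamma_one_half_eq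
  have h3 : (0:ℝ) < Real.Gamma (3/4) := Real.Gamma_pos_of_pos (by norm_num)
  have hs2 : (0:ℝ) < Real.sqrt 2 := Real.sqrt_pos.2 (by norm_num)
  have hs2sq : Real.sqrt 2 * Real.sqrt 2 = 2 := Real.mul_self_sqrt (by norm_num)
  have hpow : π ^ ((3:ℝ)/2) = π * Real.sqrt π := by
    rw [show (3:ℝ)/2 = 1 + 1/2 by norm_num, Real.rpow_add Real.pi_pos,
      Real.rpow_one, ← Real.sqrt_eq_rpow]
  have hG14 : Real.Gamma (1/4) = 2 * π / (Real.sqrt 2 * Real.Gamma (3/4)) := by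
    have : Real.Gamma (1/4) * Real.Gamma (3/4) = 2 * π / Real.sqrt 2 := by
      rw [hrefl]
      rw [div_div_eq_mul_div]
      ring
    field_simp at this ⊢
    linarith [this]
  rw [hG14, h12, hpow]
  field_simp
  ring
end

section
/- For real b, c > 0 with b ≠ c, the series ∑_{n=0}^∞ ((1/2)_n / n!) · 1/((1 + n/b)(1 + n/c)) equals (π^{1/2} b c / (b - c)) · (Γ(c)/Γ(c + 1/2) − Γ(b)/Γ(b + 1/2)). -/
open Real BigOperators

noncomputable def cc (n : ℕ) : ℝ := poch (1/2) n / n.factorial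

lemma cc_zero : cc 0 = 1 := by simp [cc, poch]

lemma cc_succ (n : ℕ) : cc (n + 1) = cc n * ((n + 1/2) / (n + 1)) := by
  simp only [cc, poch, Finset.prod_range_succ, Nat.factorial_succ]
  push_cast
  field_simp
  ring

lemma cc_pos (n : ℕ) : 0 < cc n := by
  induction n with
  | zero => simp [cc_zero]
  | succ n ih =>
    rw [cc_succ]
    positivity

lemma cc_sq_le (n : ℕ) : cc n ^ 2 ≤ 1 / (n + 1) := by
  induction n with
  | zero => simp [cc_zero]
  | succ n ih =>
    rw [cc_succ]
    push_cast
    have h1 : (0:ℝ) < n + 1 := by positivity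
    have h2 : (0:ℝ) < n + 2 := by positivity
    have key : ((n + 1/2) / (n + 1) : ℝ) ^ 2 ≤ (n + 1) / (n + 2) := by
      rw [div_pow, div_le_div_iff₀ (by positivity) h2]
      nlinarith
    calc (cc n * (((n:ℝ) + 1/2) / ((n:ℝ) + 1))) ^ 2 = cc n ^ 2 * (((n:ℝ) + 1/2) / ((n:ℝ) + 1)) ^ 2 := by ring
      _ ≤ (1 / ((n:ℝ) + 1)) * (((n:ℝ) + 1) / ((n:ℝ) + 2)) :=
          mul_le_mul ih key (by positivity) (by positivity)
      _ = 1 / ((n:ℝ) + 2) := by field_simp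
      _ = 1 / ((n:ℝ) + 1 + 1) := by ring_nf

noncomputable def dd (n : ℕ) : ℝ := ∑ k ∈ Finset.range (n + 1), cc k * cc (n - k)

lemma two_A (m : ℕ) :
    2 * ∑ k ∈ Finset.range (m + 1), (k : ℝ) * (cc k * cc (m - k)) = m * dd m := by
  have hrefl : ∑ k ∈ Finset.range (m + 1), (k : ℝ) * (cc k * cc (m - k))
      = ∑ k ∈ Finset.range (m + 1), ((m - k : ℕ) : ℝ) * (cc (m - k) * cc k) := by
    rw [← Finset.sum_range_reflect (fun k => ((m - k : ℕ) : ℝ) * (cc (m - k) * cc k)) (m + 1)]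
    apply Finset.sum_congr rfl
    intro k hk
    have hk' : k ≤ m := Nat.lt_succ_iff.mp (Finset.mem_range.mp hk)
    have h1 : m + 1 - 1 - k = m - k := by omega
    have h2 : m - (m - k) = k := by omega
    rw [h1, h2]
  rw [two_mul]
  nth_rewrite 2 [hrefl]
  rw [← Finset.sum_add_distrib, dd, Finset.mul_sum]
  apply Finset.sum_congr rfl
  intro k hk
  have hk' : k ≤ m := Nat.lt_succ_iff.mp (Finset.mem_range.mp hk)
  have : ((m - k : ℕ) : ℝ) = (m : ℝ) - k := by
    rw [Nat.cast_sub hk']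
  rw [this]
  ring

lemma A_shift (n : ℕ) :
    ∑ k ∈ Finset.range (n + 2), (k : ℝ) * (cc k * cc (n + 1 - k))
      = ∑ j ∈ Finset.range (n + 1), ((j : ℝ) + 1/2) * (cc j * cc (n - j)) := by
  rw [Finset.sum_range_succ' (fun k => (k : ℝ) * (cc k * cc (n + 1 - k))) (n + 1)]
  simp only [Nat.cast_zero, zero_mul, add_zero]
  apply Finset.sum_congr rfl
  intro j hj
  have h1 : n + 1 - (j + 1) = n - j := by omega
  rw [h1, cc_succ]
  have hj1 : ((j : ℝ) + 1) ≠ 0 := by positivity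
  push_cast
  field_simp

lemma dd_eq_one (n : ℕ) : dd n = 1 := by
  induction n with
  | zero => simp [dd, cc_zero]
  | succ n ih =>
    have h1 : ((n : ℝ) + 1) * dd (n + 1) = ((n : ℝ) + 1) * dd n := by
      have := two_A (n + 1)
      push_cast at this
      rw [A_shift] at this
      have expand : ∑ j ∈ Finset.range (n + 1), ((j : ℝ) + 1/2) * (cc j * cc (n - j))
          = (∑ j ∈ Finset.range (n + 1), (j : ℝ) * (cc j * cc (n - j))) + (1/2) * dd n := by
        rw [dd, Finset.mul_sum, ← Finset.sum_add_distrib]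
        apply Finset.sum_congr rfl
        intro j _
        ring
      rw [expand, mul_add] at this
      have h2A := two_A n
      linarith
    have hne : ((n : ℝ) + 1) ≠ 0 := by positivity
    rw [ih] at h1
    field_simp at h1
    exact h1

lemma cc_le_one (n : ℕ) : cc n ≤ 1 := by
  have h1 := cc_sq_le n
  have h2 := cc_pos n
  have h3 : (0:ℝ) < (n:ℝ) + 1 := by positivity
  have h4 : 1 / ((n:ℝ) + 1) ≤ 1 := by
    rw [div_le_one h3]; linarith
  nlinarith

lemma summable_cc_mul_pow {x : ℝ} (h0 : 0 ≤ x) (h1 : x < 1) :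
    Summable (fun n => cc n * x ^ n) := by
  apply Summable.of_nonneg_of_le (fun n => mul_nonneg (cc_pos n).le (pow_nonneg h0 n))
    (fun n => ?_) (summable_geometric_of_lt_one h0 h1)
  calc cc n * x ^ n ≤ 1 * x ^ n :=
        mul_le_mul_of_nonneg_right (cc_le_one n) (by positivity)
    _ = x ^ n := one_mul _

lemma f_sq {x : ℝ} (h0 : 0 ≤ x) (h1 : x < 1) :
    (∑' n, cc n * x ^ n) * (∑' n, cc n * x ^ n) = (1 - x)⁻¹ := by
  have hs : Summable fun n => ‖cc n * x ^ n‖ := by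
    simpa only [Real.norm_eq_abs, summable_abs_iff] using summable_cc_mul_pow h0 h1
  rw [tsum_mul_tsum_eq_tsum_sum_range_of_summable_norm hs hs]
  have : ∀ n : ℕ, ∑ k ∈ Finset.range (n + 1), (cc k * x ^ k) * (cc (n - k) * x ^ (n - k))
      = x ^ n := by
    intro n
    have : ∀ k ∈ Finset.range (n + 1), (cc k * x ^ k) * (cc (n - k) * x ^ (n - k))
        = (cc k * cc (n - k)) * x ^ n := by
      intro k hk
      have hk' : k ≤ n := Nat.lt_succ_iff.mp (Finset.mem_range.mp hk)
      have : x ^ k * x ^ (n - k) = x ^ n := by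
        rw [← pow_add, Nat.add_sub_cancel' hk']
      rw [← this]; ring
    rw [Finset.sum_congr rfl this, ← Finset.sum_mul]
    have := dd_eq_one n
    rw [dd] at this
    rw [this, one_mul]
  rw [tsum_congr this, tsum_geometric_of_lt_one h0 h1]

lemma f_eq {x : ℝ} (h0 : 0 ≤ x) (h1 : x < 1) :
    ∑' n, cc n * x ^ n = (1 - x) ^ (-(1/2) : ℝ) := by
  have hpos : (0:ℝ) < ∑' n, cc n * x ^ n := by
    have h00 : (0:ℝ) < cc 0 * x ^ 0 := by simp [cc_zero]
    exact Summable.tsum_pos (summable_cc_mul_pow h0 h1) (fun n => mul_nonneg (cc_pos n).le (pow_nonneg h0 n)) 0 h00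
  have hx : (0:ℝ) < 1 - x := by linarith
  have hsq : (∑' n, cc n * x ^ n) ^ 2 = ((1 - x) ^ (-(1/2) : ℝ)) ^ 2 := by
    rw [sq, f_sq h0 h1, ← Real.rpow_natCast ((1-x) ^ (-(1/2):ℝ)) 2, ← Real.rpow_mul hx.le]
    norm_num
    rw [Real.rpow_neg_one]
  have hpos2 : (0:ℝ) < (1 - x) ^ (-(1/2) : ℝ) := Real.rpow_pos_of_pos hx _
  nlinarith [hsq, hpos, hpos2]

lemma cc_le_rpow (n : ℕ) : cc n ≤ ((n : ℝ) + 1) ^ (-(1/2) : ℝ) := by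
  have h3 : (0:ℝ) < (n:ℝ) + 1 := by positivity
  have h := cc_sq_le n
  have : cc n = Real.sqrt (cc n ^ 2) := by
    rw [Real.sqrt_sq (cc_pos n).le]
  rw [this]
  calc Real.sqrt (cc n ^ 2) ≤ Real.sqrt (1 / ((n:ℝ) + 1)) := Real.sqrt_le_sqrt h
    _ = ((n : ℝ) + 1) ^ (-(1/2) : ℝ) := by
        rw [Real.rpow_neg h3.le, one_div, Real.sqrt_inv, Real.sqrt_eq_rpow]

lemma summable_cc_div {a : ℝ} (ha : 0 < a) : Summable (fun n : ℕ => cc n / ((n : ℝ) + a)) := by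
  have hsum32 : Summable (fun n : ℕ => ((n : ℝ) + 1) ^ (-(3/2) : ℝ)) := by
    have := (Real.summable_nat_rpow (p := -(3/2))).mpr (by norm_num)
    have h2 := (summable_nat_add_iff 1).mpr this
    apply h2.congr
    intro n
    push_cast
    ring_nf
  apply Summable.of_nonneg_of_le
    (fun n => div_nonneg (cc_pos n).le (by positivity)) (fun n => ?_)
    (hsum32.mul_left (1 + a⁻¹))
  have h3 : (0:ℝ) < (n:ℝ) + 1 := by positivity
  have h4 : (0:ℝ) < (n:ℝ) + a := by positivity
  have key : ((n:ℝ) + a)⁻¹ ≤ (1 + a⁻¹) * ((n:ℝ) + 1)⁻¹ := by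
    rw [← one_div, ← div_eq_mul_inv, div_le_div_iff₀ h4 h3]
    have e : (1 + a⁻¹) * ((n:ℝ) + a) - ((n:ℝ) + 1) = a + n * a⁻¹ := by
      field_simp
      ring
    have h5 : (0:ℝ) ≤ (n:ℝ) * a⁻¹ := by positivity
    nlinarith
  have hcomb : ((n:ℝ) + 1) ^ (-(1/2) : ℝ) * ((n:ℝ) + 1)⁻¹ = ((n:ℝ) + 1) ^ (-(3/2) : ℝ) := by
    rw [← Real.rpow_neg_one ((n:ℝ) + 1), ← Real.rpow_add h3]
    norm_num
  calc cc n / ((n:ℝ) + a) = cc n * ((n:ℝ) + a)⁻¹ := div_eq_mul_inv _ _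
    _ ≤ ((n:ℝ) + 1) ^ (-(1/2) : ℝ) * ((1 + a⁻¹) * ((n:ℝ) + 1)⁻¹) :=
        mul_le_mul (cc_le_rpow n) key (by positivity) (by positivity)
    _ = (1 + a⁻¹) * (((n:ℝ) + 1) ^ (-(1/2) : ℝ) * ((n:ℝ) + 1)⁻¹) := by ring
    _ = (1 + a⁻¹) * ((n:ℝ) + 1) ^ (-(3/2) : ℝ) := by rw [hcomb]

open MeasureTheory in
lemma integral_term {a : ℝ} (ha : 0 < a) (n : ℕ) :
    ∫ x in Set.Ioo (0:ℝ) 1, cc n * x ^ ((n : ℝ) + a - 1) = cc n / ((n : ℝ) + a) := by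
  have hr : (-1 : ℝ) < (n : ℝ) + a - 1 := by linarith [Nat.cast_nonneg (α := ℝ) n]
  have h1 : ∫ x in Set.Ioo (0:ℝ) 1, cc n * x ^ ((n : ℝ) + a - 1)
      = ∫ x in (0:ℝ)..1, cc n * x ^ ((n : ℝ) + a - 1) := by
    rw [intervalIntegral.integral_of_le zero_le_one, integral_Ioc_eq_integral_Ioo]
  rw [h1, intervalIntegral.integral_const_mul, integral_rpow (Or.inl hr)]
  have h2 : ((n : ℝ) + a - 1 + 1) = (n : ℝ) + a := by ring
  rw [h2, Real.one_rpow, Real.zero_rpow (by positivity)]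
  ring

open MeasureTheory in
lemma integrable_term {a : ℝ} (ha : 0 < a) (n : ℕ) :
    IntegrableOn (fun x => cc n * x ^ ((n : ℝ) + a - 1)) (Set.Ioo (0:ℝ) 1) := by
  have hr : (-1 : ℝ) < (n : ℝ) + a - 1 := by linarith [Nat.cast_nonneg (α := ℝ) n]
  have := (intervalIntegral.intervalIntegrable_rpow' (a := 0) (b := 1) hr).const_mul (cc n)
  rw [intervalIntegrable_iff_integrableOn_Ioc_of_le zero_le_one] at this
  exact this.mono_set Set.Ioo_subset_Ioc_self

open MeasureTheory in
lemma tsum_cc_div_eq_integral {a : ℝ} (ha : 0 < a) :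
    ∑' n : ℕ, cc n / ((n:ℝ) + a)
      = ∫ x in Set.Ioo (0:ℝ) 1, x ^ (a - 1) * (1 - x) ^ (-(1/2) : ℝ) := by
  have hnorm : ∀ n : ℕ, (∫ x in Set.Ioo (0:ℝ) 1, ‖cc n * x ^ ((n:ℝ) + a - 1)‖)
      = cc n / ((n:ℝ) + a) := by
    intro n
    rw [← integral_term ha n]
    apply setIntegral_congr_fun measurableSet_Ioo
    intro x hx
    simp only [Real.norm_eq_abs]
    rw [abs_of_nonneg (mul_nonneg (cc_pos n).le (Real.rpow_nonneg hx.1.le _))]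
  have hswap := integral_tsum_of_summable_integral_norm
    (μ := volume.restrict (Set.Ioo (0:ℝ) 1))
    (F := fun (n : ℕ) (x : ℝ) => cc n * x ^ ((n:ℝ) + a - 1))
    (fun n => integrable_term ha n)
    (by rw [funext hnorm]; exact summable_cc_div ha)
  have hterms : (fun n : ℕ => ∫ x in Set.Ioo (0:ℝ) 1, cc n * x ^ ((n:ℝ) + a - 1))
      = fun n : ℕ => cc n / ((n:ℝ) + a) := funext fun n => integral_term ha n
  rw [hterms] at hswap
  rw [hswap]
  apply setIntegral_congr_fun measurableSet_Ioo
  intro x hx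
  have hx0 : (0:ℝ) < x := hx.1
  have hx1 : x < 1 := hx.2
  have hterm : ∀ n : ℕ, cc n * x ^ ((n:ℝ) + a - 1) = x ^ (a - 1) * (cc n * x ^ n) := by
    intro n
    have : x ^ ((n:ℝ) + a - 1) = x ^ (a - 1) * x ^ (n:ℝ) := by
      rw [← Real.rpow_add hx0]; ring_nf
    rw [this, Real.rpow_natCast]
    ring
  simp only []
  rw [tsum_congr hterm, tsum_mul_left, f_eq hx0.le hx1]

open MeasureTheory in
lemma beta_eval {a : ℝ} (ha : 0 < a) :
    ∫ x in Set.Ioo (0:ℝ) 1, x ^ (a - 1) * (1 - x) ^ (-(1/2) : ℝ)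
      = Real.sqrt π * Real.Gamma a / Real.Gamma (a + 1/2) := by
  have hIoo : (∫ x in Set.Ioo (0:ℝ) 1, x ^ (a - 1) * (1 - x) ^ (-(1/2):ℝ))
      = ∫ x in (0:ℝ)..1, x ^ (a - 1) * (1 - x) ^ (-(1/2):ℝ) := by
    rw [intervalIntegral.integral_of_le zero_le_one, integral_Ioc_eq_integral_Ioo]
  have hb : Complex.betaIntegral (a : ℂ) (1/2 : ℂ)
      = ((∫ x in (0:ℝ)..1, x ^ (a - 1) * (1 - x) ^ (-(1/2):ℝ) : ℝ) : ℂ) := by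
    rw [Complex.betaIntegral]
    have hcong : Set.EqOn (fun x : ℝ => (x:ℂ) ^ ((a:ℂ) - 1) * (1 - (x:ℂ)) ^ ((1/2:ℂ) - 1))
        (fun x : ℝ => ((x ^ (a - 1) * (1 - x) ^ (-(1/2):ℝ) : ℝ) : ℂ)) (Set.uIcc (0:ℝ) 1) := by
      intro x hx
      rw [Set.uIcc_of_le zero_le_one] at hx
      have hx0 : (0:ℝ) ≤ x := hx.1
      have hx1 : (0:ℝ) ≤ 1 - x := by linarith [hx.2]
      have e1 : ((x : ℂ)) ^ ((a : ℂ) - 1) = ((x ^ (a - 1) : ℝ) : ℂ) := by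
        rw [Complex.ofReal_cpow hx0]
        push_cast
        rfl
      have e2 : (1 - (x : ℂ)) ^ ((1/2 : ℂ) - 1) = (((1 - x) ^ (-(1/2):ℝ) : ℝ) : ℂ) := by
        rw [Complex.ofReal_cpow hx1]
        push_cast
        norm_num
      simp only
      rw [e1, e2]
      push_cast
      rfl
    rw [intervalIntegral.integral_congr hcong]
    exact RCLike.intervalIntegral_ofReal
  have hgamma := Complex.Gamma_mul_Gamma_eq_betaIntegral
    (s := (a : ℂ)) (t := (1/2 : ℂ)) (by simpa using ha) (by norm_num)
  rw [hb] at hgamma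
  have ha2 : ((a : ℂ) + 1/2) = ((a + 1/2 : ℝ) : ℂ) := by push_cast; ring
  rw [ha2, Complex.Gamma_ofReal, Complex.Gamma_ofReal] at hgamma
  have h12 : ((1/2 : ℂ)) = ((1/2 : ℝ) : ℂ) := by push_cast; ring
  rw [h12, Complex.Gamma_ofReal] at hgamma
  have hgr : Real.Gamma a * Real.Gamma (1/2)
      = Real.Gamma (a + 1/2) * ∫ x in (0:ℝ)..1, x ^ (a - 1) * (1 - x) ^ (-(1/2):ℝ) := by
    exact_mod_cast hgamma
  have hpos : 0 < Real.Gamma (a + 1/2) := Real.Gamma_pos_of_pos (by linarith)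
  rw [hIoo]
  rw [Real.Gamma_one_half_eq] at hgr
  field_simp at hgr ⊢
  linarith

lemma tsum_cc_div_eq {a : ℝ} (ha : 0 < a) :
    ∑' n : ℕ, cc n / ((n:ℝ) + a) = Real.sqrt π * Real.Gamma a / Real.Gamma (a + 1/2) :=
  (tsum_cc_div_eq_integral ha).trans (beta_eval ha)

theorem stmt4 (b c : ℝ) (hb : 0 < b) (hc : 0 < c) (hbc : b ≠ c) :
    ∑' n : ℕ, (poch (1/2) n / n.factorial) * (1 / ((1 + n / b) * (1 + n / c))) =
      Real.sqrt π * b * c / (b - c) *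
        (Real.Gamma c / Real.Gamma (c + 1/2) - Real.Gamma b / Real.Gamma (b + 1/2)) := by
  have hbc' : b - c ≠ 0 := sub_ne_zero.mpr hbc
  have hterm : ∀ n : ℕ, (poch (1/2) n / n.factorial) * (1 / ((1 + n / b) * (1 + n / c)))
      = (b * c / (b - c)) * (cc n / ((n:ℝ) + c) - cc n / ((n:ℝ) + b)) := by
    intro n
    have hnb : ((n:ℝ) + b) ≠ 0 := by positivity
    have hnc : ((n:ℝ) + c) ≠ 0 := by positivity
    rw [show (poch (1/2) n / n.factorial : ℝ) = cc n from rfl]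
    rw [div_sub_div _ _ hnc hnb]
    have e1 : (1 + (n:ℝ) / b) = ((n:ℝ) + b) / b := by field_simp; ring
    have e2 : (1 + (n:ℝ) / c) = ((n:ℝ) + c) / c := by field_simp; ring
    rw [e1, e2]
    field_simp
    ring
  rw [tsum_congr hterm, tsum_mul_left,
    Summable.tsum_sub (summable_cc_div hc) (summable_cc_div hb),
    tsum_cc_div_eq hc, tsum_cc_div_eq hb]
  ring
end

section
/- The series ∑_{n=0}^∞ ((1/2)_n / n!)^2 · 1/((n+1)(n+2)) equals 16/(9π). -/
open Real BigOperators

noncomputable def myc (n : ℕ) : ℝ := (poch (1/2) n / n.factorial) ^ 2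

lemma myc_succ (n : ℕ) : myc (n + 1) = myc n * ((2 * n + 1) / (2 * n + 2)) ^ 2 := by
  have hfac : ((n.factorial : ℝ)) ≠ 0 := Nat.cast_ne_zero.mpr n.factorial_ne_zero
  have h1 : ((2 : ℝ) * n + 2) ≠ 0 := by positivity
  simp only [myc, poch, Finset.prod_range_succ, Nat.factorial_succ, Nat.cast_mul,
    Nat.cast_add, Nat.cast_one]
  field_simp
  ring

lemma myc_zero : myc 0 = 1 := by simp [myc, poch]

lemma myc_wallis (n : ℕ) : myc n * Real.Wallis.W n * (2 * n + 1) = 1 := by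
  induction n with
  | zero => simp [myc_zero, Real.Wallis.W]
  | succ n ih =>
    have h1 : ((2 : ℝ) * n + 1) ≠ 0 := by positivity
    have h2 : ((2 : ℝ) * n + 2) ≠ 0 := by positivity
    have h3 : ((2 : ℝ) * n + 3) ≠ 0 := by positivity
    rw [myc_succ, Real.Wallis.W_succ]
    push_cast
    calc myc n * ((2 * n + 1) / (2 * n + 2)) ^ 2 *
          (Real.Wallis.W n * ((2 * ↑n + 2) / (2 * ↑n + 1) * ((2 * ↑n + 2) / (2 * ↑n + 3)))) *
          (2 * (↑n + 1) + 1)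
        = myc n * Real.Wallis.W n * (2 * n + 1) := by field_simp; ring
      _ = 1 := ih

lemma partial_sum_eq (N : ℕ) :
    ∑ n ∈ Finset.range N, (poch (1/2) n / n.factorial) ^ 2 *
        (1 / (((n : ℝ) + 1) * ((n : ℝ) + 2))) =
      myc N * (4 * N * (4 * N + 5)) / (9 * (N + 1)) := by
  induction N with
  | zero => simp
  | succ N ih =>
    rw [Finset.sum_range_succ, ih, myc_succ]
    have h1 : ((N : ℝ) + 1) ≠ 0 := by positivity
    have h2 : ((N : ℝ) + 2) ≠ 0 := by positivity
    have h3 : ((2 : ℝ) * N + 2) ≠ 0 := by positivity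
    show _ = myc N * ((2 * N + 1) / (2 * N + 2)) ^ 2 * (4 * ↑(N + 1) * (4 * ↑(N + 1) + 5)) /
        (9 * (↑(N + 1) + 1))
    push_cast
    rw [show ((poch (1/2) N / N.factorial) ^ 2 : ℝ) = myc N from rfl]
    field_simp
    ring

lemma rat_tendsto :
    Filter.Tendsto (fun x : ℝ => 4 * x * (4 * x + 5) / (9 * (x + 1) * (2 * x + 1)))
      Filter.atTop (nhds (8 / 9)) := by
  have hx : Filter.Tendsto (fun x : ℝ => 1 / x) Filter.atTop (nhds 0) := by
    simpa using tendsto_inv_atTop_zero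
  have h1 : Filter.Tendsto
      (fun x : ℝ => (4 * (4 + 5 * (1 / x))) / (9 * (1 + 1 / x) * (2 + 1 / x)))
      Filter.atTop (nhds ((4 * (4 + 5 * (0:ℝ))) / (9 * (1 + 0) * (2 + 0)))) := by
    apply Filter.Tendsto.div
    · exact tendsto_const_nhds.mul (tendsto_const_nhds.add (tendsto_const_nhds.mul hx))
    · exact (tendsto_const_nhds.mul (tendsto_const_nhds.add hx)).mul
        (tendsto_const_nhds.add hx)
    · norm_num
  have h2 : ((4 * (4 + 5 * (0:ℝ))) / (9 * (1 + 0) * (2 + 0))) = 8 / 9 := by norm_num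
  rw [h2] at h1
  apply h1.congr'
  filter_upwards [Filter.eventually_ge_atTop (1 : ℝ)] with x hx1
  have hx0 : x ≠ 0 := by linarith
  have hx2 : x + 1 ≠ 0 := by linarith
  have hx3 : 2 * x + 1 ≠ 0 := by linarith
  field_simp

theorem stmt9 :
    ∑' n : ℕ, (poch (1/2) n / n.factorial) ^ 2 * (1 / (((n : ℝ) + 1) * ((n : ℝ) + 2))) =
      16 / (9 * π) := by
  have hnonneg : ∀ n : ℕ, 0 ≤ (poch (1/2) n / n.factorial) ^ 2 *
      (1 / (((n : ℝ) + 1) * ((n : ℝ) + 2))) := by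
    intro n
    have : (0:ℝ) < ((n : ℝ) + 1) * ((n : ℝ) + 2) := by positivity
    positivity
  have hW : ∀ n : ℕ, (0:ℝ) < Real.Wallis.W n := Real.Wallis.W_pos
  -- the partial sums tend to 16 / (9π)
  have key : Filter.Tendsto
      (fun N : ℕ => myc N * (4 * (N:ℝ) * (4 * N + 5)) / (9 * (N + 1)))
      Filter.atTop (nhds (16 / (9 * π))) := by
    have heq : ∀ N : ℕ, myc N * (4 * (N:ℝ) * (4 * N + 5)) / (9 * (N + 1)) =
        (4 * (N:ℝ) * (4 * N + 5) / (9 * ((N:ℝ) + 1) * (2 * N + 1))) * (Real.Wallis.W N)⁻¹ := by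
      intro N
      have hw := myc_wallis N
      have h1 : ((2 : ℝ) * N + 1) ≠ 0 := by positivity
      have h2 : ((N : ℝ) + 1) ≠ 0 := by positivity
      have hW' : Real.Wallis.W N ≠ 0 := (hW N).ne'
      have hc : myc N = ((2 * (N:ℝ) + 1) * Real.Wallis.W N)⁻¹ := by
        field_simp
        linarith [hw]
      rw [hc, mul_inv]
      field_simp
    have hrat : Filter.Tendsto
        (fun N : ℕ => 4 * (N:ℝ) * (4 * N + 5) / (9 * ((N:ℝ) + 1) * (2 * N + 1)))
        Filter.atTop (nhds (8 / 9)) :=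
      rat_tendsto.comp tendsto_natCast_atTop_atTop
    have hWinv : Filter.Tendsto (fun N : ℕ => (Real.Wallis.W N)⁻¹)
        Filter.atTop (nhds ((π / 2)⁻¹)) :=
      Real.Wallis.tendsto_W_nhds_pi_div_two.inv₀ (by positivity)
    have := hrat.mul hWinv
    have hval : (8 / 9 : ℝ) * (π / 2)⁻¹ = 16 / (9 * π) := by
      have := Real.pi_ne_zero
      field_simp
      ring
    rw [hval] at this
    exact this.congr fun N => (heq N).symm
  have hsum : HasSum
      (fun n : ℕ => (poch (1/2) n / n.factorial) ^ 2 * (1 / (((n : ℝ) + 1) * ((n : ℝ) + 2))))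
      (16 / (9 * π)) := by
    rw [hasSum_iff_tendsto_nat_of_nonneg hnonneg]
    exact key.congr fun N => (partial_sum_eq N).symm
  exact hsum.tsum_eq
end

section
/- The series ∑_{n=0}^∞ ((1/2)_n / n!)^2 · 1/((n+1)(n+2)(n+3)) equals 128/(225π). -/
open Real BigOperators

namespace Stmt10

open Filter Finset Topology

noncomputable def c (n : ℕ) : ℝ := (poch (1/2) n / n.factorial) ^ 2

lemma c_succ (n : ℕ) : c (n + 1) = c n * ((2 * n + 1) / (2 * n + 2)) ^ 2 := by
  have hp : poch (1/2) (n + 1) = poch (1/2) n * (1/2 + n) := Finset.prod_range_succ _ _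
  have hf : ((n + 1).factorial : ℝ) = (n + 1) * n.factorial := by
    rw [Nat.factorial_succ]; push_cast; ring
  have hfn : (n.factorial : ℝ) ≠ 0 := Nat.cast_ne_zero.2 n.factorial_ne_zero
  have hn1 : ((n : ℝ) + 1) ≠ 0 := by positivity
  unfold c
  rw [hp, hf]
  field_simp
  ring

lemma c_mul_W (n : ℕ) : c n * Real.Wallis.W n = 1 / (2 * n + 1) := by
  induction n with
  | zero => simp [c, poch, Real.Wallis.W]
  | succ n ih =>
    have h1 : (2 * (n : ℝ) + 1) ≠ 0 := by positivity
    have h2 : (2 * (n : ℝ) + 2) ≠ 0 := by positivity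
    have h3 : (2 * (n : ℝ) + 3) ≠ 0 := by positivity
    rw [c_succ, Real.Wallis.W_succ]
    have : c n * Real.Wallis.W n = 1 / (2 * n + 1) := ih
    push_cast
    calc c n * ((2 * (n:ℝ) + 1) / (2 * n + 2)) ^ 2 *
          (Real.Wallis.W n * ((2 * n + 2) / (2 * n + 1) * ((2 * n + 2) / (2 * n + 3))))
        = (c n * Real.Wallis.W n) * ((2 * n + 1) / (2 * n + 3)) := by
          field_simp
      _ = 1 / (2 * (n:ℝ) + 3) := by rw [this]; field_simp
      _ = 1 / (2 * ((n:ℝ) + 1) + 1) := by ring_nf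

lemma c_mul : ∀ n : ℕ, c n * (2 * n + 1) = (Real.Wallis.W n)⁻¹ := by
  intro n
  have hW := Real.Wallis.W_pos n
  have := c_mul_W n
  field_simp at this ⊢
  linarith [this]

lemma tendsto_cW : Tendsto (fun n : ℕ => c n * (2 * n + 1)) atTop (𝓝 (2 / π)) := by
  have h : Tendsto (fun n : ℕ => (Real.Wallis.W n)⁻¹) atTop (𝓝 ((π / 2)⁻¹)) :=
    (Real.Wallis.tendsto_W_nhds_pi_div_two).inv₀ (by positivity)
  have h2 : ((π / 2)⁻¹ : ℝ) = 2 / π := by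
    rw [inv_div]
  rw [← h2]
  exact h.congr (fun n => (c_mul n).symm)

noncomputable def t (n : ℕ) : ℝ :=
  c n * (128 * (n:ℝ)^4 + 800 * (n:ℝ)^3 + 1604 * (n:ℝ)^2 + 1068 * (n:ℝ)) /
    (225 * ((n:ℝ) + 1) * ((n:ℝ) + 2) * ((n:ℝ) + 3))

lemma key_alg (C x : ℝ) (hx : 0 ≤ x) :
    C * ((2*x+1)/(2*x+2))^2 * (128*(x+1)^4 + 800*(x+1)^3 + 1604*(x+1)^2 + 1068*(x+1)) /
      (225 * ((x+1) + 1) * ((x+1) + 2) * ((x+1) + 3))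
    = C * (128*x^4 + 800*x^3 + 1604*x^2 + 1068*x) / (225 * (x+1) * (x+2) * (x+3))
      + C * (1 / ((x+1) * (x+2) * (x+3))) := by
  have h1 : x + 1 ≠ 0 := by positivity
  have h2 : x + 2 ≠ 0 := by positivity
  have h3 : x + 3 ≠ 0 := by positivity
  have h4 : x + 4 ≠ 0 := by positivity
  have h5 : 2*x + 2 ≠ 0 := by positivity
  field_simp
  ring

lemma partial_sum (N : ℕ) :
    ∑ k ∈ Finset.range N, c k * (1 / (((k : ℝ) + 1) * ((k : ℝ) + 2) * ((k : ℝ) + 3))) = t N := by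
  induction N with
  | zero => simp [t]
  | succ N ih =>
    rw [Finset.sum_range_succ, ih]
    have hx : (0:ℝ) ≤ (N:ℝ) := Nat.cast_nonneg N
    have := key_alg (c N) (N:ℝ) hx
    unfold t
    rw [c_succ]
    push_cast
    linarith [this]

noncomputable def f (x : ℝ) : ℝ :=
  (128 + 800*x + 1604*x^2 + 1068*x^3) / (450 + 2925*x + 6300*x^2 + 5175*x^3 + 1350*x^4)

lemma t_eq (n : ℕ) (hn : 1 ≤ n) :
    t n = (c n * (2 * n + 1)) * f (1 / n) := by
  have hn0 : ((n:ℝ)) ≠ 0 := by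
    have : 0 < n := hn
    exact_mod_cast this.ne'
  have h1 : (n:ℝ) + 1 ≠ 0 := by positivity
  have h2 : (n:ℝ) + 2 ≠ 0 := by positivity
  have h3 : (n:ℝ) + 3 ≠ 0 := by positivity
  have h4 : 2*(n:ℝ) + 1 ≠ 0 := by positivity
  have hden : 450 + 2925*(1/(n:ℝ)) + 6300*(1/(n:ℝ))^2 + 5175*(1/(n:ℝ))^3 + 1350*(1/(n:ℝ))^4 ≠ 0 := by
    have : (0:ℝ) < 450 + 2925*(1/(n:ℝ)) + 6300*(1/(n:ℝ))^2 + 5175*(1/(n:ℝ))^3 + 1350*(1/(n:ℝ))^4 := by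
      have hpos : (0:ℝ) < (n:ℝ) := by positivity
      positivity
    exact this.ne'
  unfold t f
  field_simp
  ring

lemma tendsto_f : Tendsto (fun n : ℕ => f (1 / (n:ℝ))) atTop (𝓝 (64/225)) := by
  have hc : ContinuousAt f 0 := by
    apply ContinuousAt.div
    · fun_prop
    · fun_prop
    · norm_num
  have h0 : f 0 = 64/225 := by norm_num [f]
  rw [← h0]
  exact hc.tendsto.comp tendsto_one_div_atTop_nhds_zero_nat

lemma tendsto_t : Tendsto t atTop (𝓝 (128 / (225 * π))) := by
  have h : Tendsto (fun n : ℕ => (c n * (2 * n + 1)) * f (1 / n)) atTop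
      (𝓝 ((2 / π) * (64/225))) := tendsto_cW.mul tendsto_f
  have heq : (2 / π) * (64/225) = 128 / (225 * π) := by
    have := Real.pi_ne_zero
    field_simp
    ring
  rw [heq] at h
  apply h.congr'
  filter_upwards [eventually_ge_atTop 1] with n hn
  exact (t_eq n hn).symm

end Stmt10

theorem stmt10 :
    ∑' n : ℕ, (poch (1/2) n / n.factorial) ^ 2 *
        (1 / (((n : ℝ) + 1) * ((n : ℝ) + 2) * ((n : ℝ) + 3))) =
      128 / (225 * π) := by
  have hs : HasSum (fun n : ℕ => (poch (1/2) n / n.factorial) ^ 2 *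
      (1 / (((n : ℝ) + 1) * ((n : ℝ) + 2) * ((n : ℝ) + 3)))) (128 / (225 * π)) := by
    rw [hasSum_iff_tendsto_nat_of_nonneg]
    · have := Stmt10.tendsto_t
      apply this.congr'
      filter_upwards with n
      exact (Stmt10.partial_sum n).symm
    · intro i
      have h1 : (0:ℝ) < ((i : ℝ) + 1) * ((i : ℝ) + 2) * ((i : ℝ) + 3) := by positivity
      positivity
  exact hs.tsum_eq
end

section
/- For every integer p ≥ 2 and every real f, the series ∑_{n=0}^∞ ((1/2)_n / n!)^2 · (n + f)/((n+1)(n+2)···(n+p)) equals (Γ(p)/Γ(p + 1/2)^2) · (f + 1/(4(p−1))). -/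
open Real BigOperators

namespace Stmt11

open Filter Finset Topology

noncomputable def c (n : ℕ) : ℝ := (poch (1/2) n / n.factorial) ^ 2

lemma poch_zero (a : ℝ) : poch a 0 = 1 := by simp [poch]

lemma poch_one (a : ℝ) : poch a 1 = a := by simp [poch]

lemma poch_succ (a : ℝ) (n : ℕ) : poch a (n + 1) = poch a n * (a + n) :=
  Finset.prod_range_succ _ _

lemma poch_succ' (a : ℝ) (n : ℕ) : poch a (n + 1) = a * poch (a + 1) n := by
  rw [poch, Finset.prod_range_succ', mul_comm]
  simp only [Nat.cast_zero, add_zero, poch]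
  congr 1
  refine Finset.prod_congr rfl fun i _ => by push_cast; ring

lemma poch_pos {a : ℝ} (ha : 0 < a) (n : ℕ) : 0 < poch a n :=
  Finset.prod_pos fun i _ => by positivity

lemma le_poch {a : ℝ} (ha : 1 ≤ a) : ∀ {n : ℕ}, 1 ≤ n → a ≤ poch a n := by
  intro n hn
  induction n with
  | zero => omega
  | succ m ih =>
    rcases Nat.eq_zero_or_pos m with hm | hm
    · subst hm; simp [poch_one]
    · have h1 := ih hm
      rw [poch_succ]
      have hpos : (0:ℝ) < poch a m := poch_pos (by linarith) m
      nlinarith [Nat.cast_nonneg (α := ℝ) m]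

lemma c_zero : c 0 = 1 := by simp [c, poch_zero]

lemma c_nonneg (n : ℕ) : 0 ≤ c n := sq_nonneg _

lemma c_pos (n : ℕ) : 0 < c n := by
  have h1 : 0 < poch (1/2) n := poch_pos (by norm_num) n
  have h2 : (0:ℝ) < n.factorial := by exact_mod_cast n.factorial_pos
  have h3 : 0 < poch (1/2) n / n.factorial := div_pos h1 h2
  exact pow_pos h3 2

lemma c_succ (n : ℕ) : c (n + 1) = c n * ((2 * n + 1) / (2 * n + 2)) ^ 2 := by
  have hf : ((n.factorial : ℝ)) ≠ 0 := by positivity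
  have h1 : ((n:ℝ) + 1) ≠ 0 := by positivity
  have h2 : (2 * (n:ℝ) + 2) ≠ 0 := by positivity
  rw [c, c, poch_succ, Nat.factorial_succ]
  push_cast
  field_simp
  ring

lemma c_le (n : ℕ) : (2 * (n:ℝ) + 1) * c n ≤ 1 := by
  induction n with
  | zero => simp [c_zero]
  | succ m ih =>
    rw [c_succ]
    have h2 : (0:ℝ) < 2 * (m:ℝ) + 2 := by positivity
    have hc := c_nonneg m
    have key : (2 * ((m:ℝ) + 1) + 1) * ((2 * m + 1) / (2 * m + 2)) ^ 2 ≤ 2 * m + 1 := by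
      rw [div_pow, mul_div_assoc', div_le_iff₀ (by positivity : (0:ℝ) < (2 * (m:ℝ) + 2) ^ 2)]
      nlinarith [Nat.cast_nonneg (α := ℝ) m]
    push_cast
    calc (2 * ((m:ℝ) + 1) + 1) * (c m * ((2 * m + 1) / (2 * m + 2)) ^ 2)
        = ((2 * ((m:ℝ) + 1) + 1) * ((2 * m + 1) / (2 * m + 2)) ^ 2) * c m := by ring
      _ ≤ (2 * m + 1) * c m := mul_le_mul_of_nonneg_right key hc
      _ ≤ 1 := ih

lemma c_mul_W (k : ℕ) : (2 * (k:ℝ) + 1) * Real.Wallis.W k * c k = 1 := by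
  induction k with
  | zero => simp [Real.Wallis.W, c_zero]
  | succ m ih =>
    have h1 : (2*(m:ℝ)+1) ≠ 0 := by positivity
    have h2 : (2*(m:ℝ)+2) ≠ 0 := by positivity
    have h3 : (2*(m:ℝ)+3) ≠ 0 := by positivity
    have hW0 : Real.Wallis.W m ≠ 0 := (Real.Wallis.W_pos m).ne'
    have hcm : c m = 1 / ((2*(m:ℝ)+1) * Real.Wallis.W m) := by
      rw [eq_div_iff (mul_ne_zero h1 hW0)]
      linear_combination ih
    rw [Real.Wallis.W_succ, c_succ, hcm]
    push_cast
    field_simp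
    ring

lemma tendsto_inv_2n1 : Filter.Tendsto (fun n : ℕ => 1 / (2 * (n:ℝ) + 1)) Filter.atTop (𝓝 0) := by
  have h : Filter.Tendsto (fun n : ℕ => 2 * (n:ℝ) + 1) Filter.atTop Filter.atTop :=
    (tendsto_natCast_atTop_atTop.const_mul_atTop (by norm_num : (0:ℝ) < 2)).atTop_add
      tendsto_const_nhds
  exact tendsto_const_nhds.div_atTop h

lemma tendsto_4nc : Filter.Tendsto (fun n : ℕ => 4 * (n:ℝ) * c n) Filter.atTop (𝓝 (4 / π)) := by
  have hW := Real.Wallis.tendsto_W_nhds_pi_div_two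
  have hWinv : Filter.Tendsto (fun n => (Real.Wallis.W n)⁻¹) Filter.atTop (𝓝 (π/2)⁻¹) :=
    hW.inv₀ (by positivity)
  have hfrac : Filter.Tendsto (fun n : ℕ => (4 * (n:ℝ)) / (2 * n + 1)) Filter.atTop (𝓝 2) := by
    have h0 : Filter.Tendsto (fun n : ℕ => 2 - 2 / (2 * (n:ℝ) + 1)) Filter.atTop (𝓝 (2 - 0)) := by
      have h : Filter.Tendsto (fun n : ℕ => 2 * (n:ℝ) + 1) Filter.atTop Filter.atTop :=
        (tendsto_natCast_atTop_atTop.const_mul_atTop (by norm_num : (0:ℝ) < 2)).atTop_add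
          tendsto_const_nhds
      exact tendsto_const_nhds.sub (tendsto_const_nhds.div_atTop h)
    rw [sub_zero] at h0
    refine h0.congr fun n => ?_
    have h1 : (2 * (n:ℝ) + 1) ≠ 0 := by positivity
    field_simp
    ring
  have hmul := hfrac.mul hWinv
  have hval : (2 : ℝ) * (π/2)⁻¹ = 4 / π := by
    rw [inv_div]
    field_simp
    ring
  rw [hval] at hmul
  refine hmul.congr fun n => ?_
  have hW0 : Real.Wallis.W n ≠ 0 := (Real.Wallis.W_pos n).ne'
  have h1 : (2 * (n:ℝ) + 1) ≠ 0 := by positivity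
  have hcn : c n = 1 / ((2 * (n:ℝ) + 1) * Real.Wallis.W n) := by
    rw [eq_div_iff (mul_ne_zero h1 hW0)]
    linear_combination c_mul_W n
  rw [hcn]
  field_simp

lemma sum_base (N : ℕ) : ∑ n ∈ range N, c n / ((n:ℝ) + 1) = 4 * N * c N := by
  have h : ∀ n : ℕ, c n / ((n:ℝ)+1) =
      (fun k : ℕ => 4*(k:ℝ)*c k) (n+1) - (fun k : ℕ => 4*(k:ℝ)*c k) n := by
    intro n
    simp only
    rw [c_succ]
    have h1 : ((n:ℝ)+1) ≠ 0 := by positivity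
    have h2 : (2*(n:ℝ)+2) ≠ 0 := by positivity
    push_cast
    field_simp
    ring
  rw [Finset.sum_congr rfl fun n _ => h n, Finset.sum_range_sub (fun k : ℕ => 4*(k:ℝ)*c k)]
  simp

noncomputable def gam (p : ℕ) : ℝ := Real.Gamma p / Real.Gamma ((p:ℕ) + 1/2 : ℝ) ^ 2

lemma gam_one : gam 1 = 4 / π := by
  have h12 : Real.Gamma ((1:ℕ) + 1/2 : ℝ) = Real.sqrt π / 2 := by
    have : ((1:ℕ) + 1/2 : ℝ) = 1/2 + 1 := by norm_num
    rw [this, Real.Gamma_add_one (by norm_num), Real.Gamma_one_half_eq]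
    ring
  rw [gam, h12]
  rw [div_pow, Real.sq_sqrt Real.pi_pos.le]
  simp [Real.Gamma_one]
  ring

lemma gam_pos (p : ℕ) (hp : 1 ≤ p) : 0 < gam p := by
  have h1 : (0:ℝ) < p := by exact_mod_cast hp
  have h2 : 0 < Real.Gamma p := Real.Gamma_pos_of_pos h1
  have h3 : 0 < Real.Gamma ((p:ℕ) + 1/2 : ℝ) := Real.Gamma_pos_of_pos (by positivity)
  exact div_pos h2 (by positivity)

lemma gam_succ (p : ℕ) (hp : 1 ≤ p) : gam (p+1) = 4*(p:ℝ)/(2*p+1)^2 * gam p := by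
  have h1 : (0:ℝ) < p := by exact_mod_cast hp
  have hG1 : Real.Gamma (((p+1):ℕ) : ℝ) = (p:ℝ) * Real.Gamma p := by
    push_cast
    rw [Real.Gamma_add_one (ne_of_gt h1)]
  have hG2 : Real.Gamma (((p+1):ℕ) + 1/2 : ℝ) = ((p:ℝ) + 1/2) * Real.Gamma ((p:ℕ) + 1/2 : ℝ) := by
    push_cast
    have : (p:ℝ) + 1 + 1/2 = ((p:ℝ) + 1/2) + 1 := by ring
    rw [this, Real.Gamma_add_one (by positivity)]
  have h3 : 0 < Real.Gamma ((p:ℕ) + 1/2 : ℝ) := Real.Gamma_pos_of_pos (by positivity)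
  rw [gam, gam, hG1, hG2]
  have h4 : ((p:ℝ) + 1/2) ≠ 0 := by positivity
  have h5 : Real.Gamma ((p:ℕ) + 1/2 : ℝ) ≠ 0 := ne_of_gt h3
  have h6 : (2*(p:ℝ)+1) ≠ 0 := by positivity
  field_simp
  ring

lemma poch_shift (n p : ℕ) :
    poch ((n:ℝ) + 1 + 1) p = poch ((n:ℝ) + 1) p * ((n:ℝ) + 1 + p) / ((n:ℝ) + 1) := by
  have h1 := poch_succ' ((n:ℝ)+1) p
  have h2 := poch_succ ((n:ℝ)+1) p
  have h3 : ((n:ℝ)+1) ≠ 0 := by positivity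
  field_simp
  linear_combination h2 - h1

lemma step_idA (p n : ℕ) :
    c n / poch ((n:ℝ)+1) (p+1) =
      4*(p:ℝ)/(2*(p:ℝ)+1)^2 * (c n / poch ((n:ℝ)+1) p)
      + ((fun k : ℕ => 4/(2*(p:ℝ)+1)^2 * ((k:ℝ) * c k / poch ((k:ℝ)+1) p)) (n+1)
        - (fun k : ℕ => 4/(2*(p:ℝ)+1)^2 * ((k:ℝ) * c k / poch ((k:ℝ)+1) p)) n) := by
  simp only
  rw [c_succ]
  push_cast
  rw [poch_shift, poch_succ]
  have hP : (0:ℝ) < poch ((n:ℝ)+1) p := poch_pos (by positivity) p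
  have hP' : poch ((n:ℝ)+1) p ≠ 0 := ne_of_gt hP
  have h1 : ((n:ℝ)+1) ≠ 0 := by positivity
  have h2 : (2*(n:ℝ)+2) ≠ 0 := by positivity
  have h3 : (2*(p:ℝ)+1) ≠ 0 := by positivity
  have h4 : ((n:ℝ)+1+(p:ℝ)) ≠ 0 := by positivity
  field_simp
  ring

lemma step_idB (p n : ℕ) :
    c n * n / poch ((n:ℝ)+1) (p+1) =
      1/(2*(p:ℝ)+1)^2 * (c n / poch ((n:ℝ)+1) p)
      + ((fun k : ℕ => (-(4*((p:ℝ)+1))/(2*(p:ℝ)+1)^2) * ((k:ℝ) * c k / poch ((k:ℝ)+1) p)) (n+1)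
        - (fun k : ℕ => (-(4*((p:ℝ)+1))/(2*(p:ℝ)+1)^2) * ((k:ℝ) * c k / poch ((k:ℝ)+1) p)) n) := by
  simp only
  rw [c_succ]
  push_cast
  rw [poch_shift, poch_succ]
  have hP : (0:ℝ) < poch ((n:ℝ)+1) p := poch_pos (by positivity) p
  have hP' : poch ((n:ℝ)+1) p ≠ 0 := ne_of_gt hP
  have h1 : ((n:ℝ)+1) ≠ 0 := by positivity
  have h2 : (2*(n:ℝ)+2) ≠ 0 := by positivity
  have h3 : (2*(p:ℝ)+1) ≠ 0 := by positivity
  have h4 : ((n:ℝ)+1+(p:ℝ)) ≠ 0 := by positivity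
  field_simp
  ring

lemma tendsto_kc_div (p : ℕ) (hp : 1 ≤ p) :
    Filter.Tendsto (fun k : ℕ => (k:ℝ) * c k / poch ((k:ℝ)+1) p) Filter.atTop (𝓝 0) := by
  have hle : ∀ k : ℕ, (k:ℝ) * c k / poch ((k:ℝ)+1) p ≤ 1/(2*(k:ℝ)+1) := by
    intro k
    have hP : (0:ℝ) < poch ((k:ℝ)+1) p := poch_pos (by positivity) p
    have hge : ((k:ℝ)+1) ≤ poch ((k:ℝ)+1) p := le_poch (by simp) hp
    have hk0 : (0:ℝ) ≤ (k:ℝ) := Nat.cast_nonneg k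
    have hck := c_le k
    have hprod : (k:ℝ) * ((2*(k:ℝ)+1) * c k) ≤ (k:ℝ) * 1 :=
      mul_le_mul_of_nonneg_left hck hk0
    rw [div_le_div_iff₀ hP (by positivity)]
    nlinarith [c_nonneg k]
  have hnn : ∀ k : ℕ, 0 ≤ (k:ℝ) * c k / poch ((k:ℝ)+1) p := by
    intro k
    have hP : (0:ℝ) < poch ((k:ℝ)+1) p := poch_pos (by positivity) p
    have hc := c_nonneg k
    have hk0 : (0:ℝ) ≤ (k:ℝ) := Nat.cast_nonneg k
    positivity
  exact squeeze_zero hnn hle tendsto_inv_2n1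

lemma hasSum_stepA (p : ℕ) (hp : 1 ≤ p) {A : ℝ}
    (hA : HasSum (fun n : ℕ => c n / poch ((n:ℝ)+1) p) A) :
    HasSum (fun n : ℕ => c n / poch ((n:ℝ)+1) (p+1)) (4*(p:ℝ)/(2*(p:ℝ)+1)^2 * A) := by
  set G : ℕ → ℝ := fun k => 4/(2*(p:ℝ)+1)^2 * ((k:ℝ) * c k / poch ((k:ℝ)+1) p) with hG
  have hnn : ∀ n : ℕ, 0 ≤ c n / poch ((n:ℝ)+1) (p+1) := fun n => by
    have hc := c_nonneg n
    have hP : (0:ℝ) < poch ((n:ℝ)+1) (p+1) := poch_pos (by positivity) _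
    positivity
  rw [hasSum_iff_tendsto_nat_of_nonneg hnn]
  have hsum : ∀ N : ℕ, ∑ n ∈ range N, c n / poch ((n:ℝ)+1) (p+1)
      = 4*(p:ℝ)/(2*(p:ℝ)+1)^2 * ∑ n ∈ range N, c n / poch ((n:ℝ)+1) p + (G N - G 0) := by
    intro N
    rw [Finset.mul_sum, ← Finset.sum_range_sub G, ← Finset.sum_add_distrib]
    exact Finset.sum_congr rfl fun n _ => step_idA p n
  have hG0 : G 0 = 0 := by simp [hG]
  have hGlim : Filter.Tendsto G Filter.atTop (𝓝 0) := by
    have h := (tendsto_kc_div p hp).const_mul (4/(2*(p:ℝ)+1)^2)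
    simpa [hG] using h
  have hlim : Filter.Tendsto (fun N : ℕ => 4*(p:ℝ)/(2*(p:ℝ)+1)^2 * ∑ n ∈ range N, c n / poch ((n:ℝ)+1) p + (G N - G 0)) Filter.atTop (𝓝 (4*(p:ℝ)/(2*(p:ℝ)+1)^2 * A)) := by
    have h := ((hA.tendsto_sum_nat.const_mul (4*(p:ℝ)/(2*(p:ℝ)+1)^2)).add
      (hGlim.sub (tendsto_const_nhds (x := G 0))))
    simpa [hG0] using h
  exact hlim.congr fun N => (hsum N).symm

lemma hasSum_stepB (p : ℕ) (hp : 1 ≤ p) {A : ℝ}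
    (hA : HasSum (fun n : ℕ => c n / poch ((n:ℝ)+1) p) A) :
    HasSum (fun n : ℕ => c n * n / poch ((n:ℝ)+1) (p+1)) (1/(2*(p:ℝ)+1)^2 * A) := by
  set G : ℕ → ℝ := fun k => (-(4*((p:ℝ)+1))/(2*(p:ℝ)+1)^2) * ((k:ℝ) * c k / poch ((k:ℝ)+1) p) with hG
  have hnn : ∀ n : ℕ, 0 ≤ c n * n / poch ((n:ℝ)+1) (p+1) := fun n => by
    have hc := c_nonneg n
    have hk0 : (0:ℝ) ≤ (n:ℝ) := Nat.cast_nonneg n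
    have hP : (0:ℝ) < poch ((n:ℝ)+1) (p+1) := poch_pos (by positivity) _
    positivity
  rw [hasSum_iff_tendsto_nat_of_nonneg hnn]
  have hsum : ∀ N : ℕ, ∑ n ∈ range N, c n * n / poch ((n:ℝ)+1) (p+1)
      = 1/(2*(p:ℝ)+1)^2 * ∑ n ∈ range N, c n / poch ((n:ℝ)+1) p + (G N - G 0) := by
    intro N
    rw [Finset.mul_sum, ← Finset.sum_range_sub G, ← Finset.sum_add_distrib]
    exact Finset.sum_congr rfl fun n _ => step_idB p n
  have hG0 : G 0 = 0 := by simp [hG]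
  have hGlim : Filter.Tendsto G Filter.atTop (𝓝 0) := by
    have h := (tendsto_kc_div p hp).const_mul ((-(4*((p:ℝ)+1))/(2*(p:ℝ)+1)^2))
    simpa [hG] using h
  have hlim : Filter.Tendsto (fun N : ℕ => 1/(2*(p:ℝ)+1)^2 * ∑ n ∈ range N, c n / poch ((n:ℝ)+1) p + (G N - G 0)) Filter.atTop (𝓝 (1/(2*(p:ℝ)+1)^2 * A)) := by
    have h := ((hA.tendsto_sum_nat.const_mul (1/(2*(p:ℝ)+1)^2)).add
      (hGlim.sub (tendsto_const_nhds (x := G 0))))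
    simpa [hG0] using h
  exact hlim.congr fun N => (hsum N).symm

lemma hasA1 : HasSum (fun n : ℕ => c n / poch ((n:ℝ) + 1) 1) (4 / π) := by
  have hnn : ∀ n : ℕ, 0 ≤ c n / poch ((n:ℝ)+1) 1 := fun n => by
    have hc := c_nonneg n
    have hP : (0:ℝ) < poch ((n:ℝ)+1) 1 := poch_pos (by positivity) _
    positivity
  rw [hasSum_iff_tendsto_nat_of_nonneg hnn]
  have h : (fun N : ℕ => ∑ n ∈ range N, c n / poch ((n:ℝ)+1) 1)
      = fun N : ℕ => 4*(N:ℝ)*c N := by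
    funext N
    rw [← sum_base]
    exact Finset.sum_congr rfl fun n _ => by rw [poch_one]
  rw [h]
  exact tendsto_4nc

lemma hasA (p : ℕ) (hp : 1 ≤ p) :
    HasSum (fun n : ℕ => c n / poch ((n:ℝ)+1) p) (gam p) := by
  induction p, hp using Nat.le_induction with
  | base => rw [gam_one]; exact hasA1
  | succ q hq ih =>
    rw [gam_succ q hq]
    exact hasSum_stepA q hq ih

end Stmt11

theorem stmt11 (p : ℕ) (hp : 2 ≤ p) (f : ℝ) :
    ∑' n : ℕ, (poch (1/2) n / n.factorial) ^ 2 * (((n : ℝ) + f) / poch ((n : ℝ) + 1) p) =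
      Real.Gamma p / Real.Gamma (p + 1/2) ^ 2 * (f + 1 / (4 * ((p : ℝ) - 1))) := by
  obtain ⟨q, rfl⟩ : ∃ q, p = q + 1 := ⟨p - 1, by omega⟩
  have hq : 1 ≤ q := by omega
  have hA := Stmt11.hasA (q+1) (by omega)
  have hB := Stmt11.hasSum_stepB q hq (Stmt11.hasA q hq)
  have hsum := (hA.mul_left f).add hB
  have hterm : (fun n : ℕ => f * (Stmt11.c n / poch ((n:ℝ)+1) (q+1)) + Stmt11.c n * n / poch ((n:ℝ)+1) (q+1))
      = fun n : ℕ => (poch (1/2) n / n.factorial) ^ 2 * (((n : ℝ) + f) / poch ((n : ℝ) + 1) (q+1)) := by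
    funext n
    simp only [Stmt11.c]
    ring
  rw [hterm] at hsum
  rw [hsum.tsum_eq]
  have hgam := Stmt11.gam_succ q hq
  have hq0 : ((q:ℝ)) ≠ 0 := by
    have : (0:ℝ) < q := by exact_mod_cast hq
    exact ne_of_gt this
  have h3 : (2*(q:ℝ)+1) ≠ 0 := by positivity
  show f * Stmt11.gam (q+1) + 1/(2*(q:ℝ)+1)^2 * Stmt11.gam q
      = Stmt11.gam (q+1) * (f + 1 / (4 * (((q+1:ℕ) : ℝ) - 1)))
  rw [hgam]
  push_cast
  field_simp
  rw [add_sub_cancel_right]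
  linear_combination (-(Stmt11.gam q)) * mul_inv_cancel₀ hq0
end

section
/- For every integer p ≥ 3 and every real f, the series ∑_{n=0}^∞ ((1/2)_n / n!)^2 · (n + f)(n + f + 1)/((n+1)(n+2)···(n+p)) equals (Γ(p)/Γ(p + 1/2)^2) · (f(f+1) + (f+1)/(2(p−1)) + 9/(16(p−1)(p−2))). -/
open Real BigOperators

open Filter Topology

namespace Stmt12Aux

lemma poch_succ (a : ℝ) (n : ℕ) : poch a (n + 1) = poch a n * (a + n) :=
  Finset.prod_range_succ _ _

lemma poch_zero (a : ℝ) : poch a 0 = 1 := Finset.prod_range_zero _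

lemma poch_half_pos (n : ℕ) : 0 < poch (1/2) n :=
  Finset.prod_pos fun i _ => by positivity

lemma poch_half_sq_le (n : ℕ) : poch (1/2) n ^ 2 * ((n : ℝ) + 1) ≤ (n.factorial : ℝ) ^ 2 := by
  induction n with
  | zero => simp [poch_zero]
  | succ n ih =>
    have hp := poch_half_pos n
    have hcube : (1/2 + (n:ℝ))^2 * ((n:ℝ) + 2) ≤ ((n:ℝ) + 1)^3 := by nlinarith [sq_nonneg (n:ℝ)]
    have h1 : poch (1/2) (n+1) ^ 2 * ((n:ℝ) + 1 + 1)
        = poch (1/2) n ^2 * ((1/2 + (n:ℝ))^2 * ((n:ℝ)+2)) := by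
      rw [poch_succ]; ring
    push_cast
    rw [h1]
    calc poch (1/2) n ^2 * ((1/2 + (n:ℝ))^2 * ((n:ℝ)+2))
        ≤ poch (1/2) n ^2 * (((n:ℝ)+1)^3) := by
          exact mul_le_mul_of_nonneg_left hcube (by positivity)
      _ = (poch (1/2) n ^2 * ((n:ℝ)+1)) * ((n:ℝ)+1)^2 := by ring
      _ ≤ (n.factorial : ℝ)^2 * ((n:ℝ)+1)^2 := by
          exact mul_le_mul_of_nonneg_right ih (by positivity)
      _ = ((n+1).factorial : ℝ)^2 := by
          rw [Nat.factorial_succ]; push_cast; ring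

end Stmt12Aux

namespace Stmt12Aux

noncomputable def t (q n : ℕ) : ℝ := poch (1/2) n ^ 2 / (n.factorial * (n + q).factorial)

lemma t_nonneg (q n : ℕ) : 0 ≤ t q n := by
  unfold t; positivity

lemma t_le {q : ℕ} (hq : 1 ≤ q) (n : ℕ) : t q n ≤ 1 / ((n : ℝ) + 1) ^ 2 := by
  unfold t
  have h1 : poch (1/2) n ^ 2 ≤ (n.factorial : ℝ)^2 / ((n:ℝ)+1) := by
    rw [le_div_iff₀ (by positivity)]
    exact poch_half_sq_le n
  have h2 : ((n.factorial : ℝ))^2 * ((n:ℝ)+1) ≤ (n.factorial : ℝ) * ((n+q).factorial : ℝ) := by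
    have : (n+1).factorial ≤ (n+q).factorial := Nat.factorial_le (by omega)
    have h3 : ((n+1).factorial : ℝ) ≤ ((n+q).factorial : ℝ) := by exact_mod_cast this
    calc ((n.factorial : ℝ))^2 * ((n:ℝ)+1) = (n.factorial : ℝ) * ((n+1).factorial : ℝ) := by
          rw [Nat.factorial_succ]; push_cast; ring
      _ ≤ (n.factorial : ℝ) * ((n+q).factorial : ℝ) :=
          mul_le_mul_of_nonneg_left h3 (by positivity)
  calc poch (1/2) n ^ 2 / ((n.factorial : ℝ) * ((n+q).factorial : ℝ))
      ≤ ((n.factorial : ℝ)^2 / ((n:ℝ)+1)) / ((n.factorial : ℝ)^2 * ((n:ℝ)+1)) := by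
        apply div_le_div₀ (by positivity) h1 (by positivity) h2
    _ = 1 / ((n : ℝ) + 1) ^ 2 := by
        field_simp

lemma summable_sq_inv : Summable (fun n : ℕ => 1 / ((n : ℝ) + 1) ^ 2) := by
  have h : Summable (fun n : ℕ => 1 / (n : ℝ) ^ 2) :=
    Real.summable_one_div_nat_pow.mpr one_lt_two
  have := (_root_.summable_nat_add_iff (f := fun n : ℕ => 1 / (n : ℝ) ^ 2) 1).mpr h
  refine this.congr fun n => ?_
  push_cast
  ring

lemma summable_t {q : ℕ} (hq : 1 ≤ q) : Summable (t q) :=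
  Summable.of_nonneg_of_le (t_nonneg q) (t_le hq) summable_sq_inv

end Stmt12Aux

namespace Stmt12Aux

noncomputable def T (q : ℕ) : ℝ := ∑' n, t q n

lemma key (q n : ℕ) :
    (q : ℝ) * t q n - ((q : ℝ) + 1/2) ^ 2 * t (q+1) n
      = (n : ℝ) * t q n - ((n : ℝ) + 1) * t q (n+1) := by
  unfold t
  have hf1 : ((n + (q+1)).factorial : ℝ) = ((n+q).factorial : ℝ) * ((n:ℝ) + q + 1) := by
    have : n + (q+1) = (n+q) + 1 := by omega
    rw [this, Nat.factorial_succ]; push_cast; ring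
  have hf2 : (((n+1) + q).factorial : ℝ) = ((n+q).factorial : ℝ) * ((n:ℝ) + q + 1) := by
    have : (n+1) + q = (n+q) + 1 := by omega
    rw [this, Nat.factorial_succ]; push_cast; ring
  have hf3 : ((n+1).factorial : ℝ) = ((n:ℝ)+1) * (n.factorial : ℝ) := by
    rw [Nat.factorial_succ]; push_cast; ring
  rw [hf1, hf2, hf3, poch_succ]
  have hF : (n.factorial : ℝ) ≠ 0 := by positivity
  have hH : ((n+q).factorial : ℝ) ≠ 0 := by positivity
  have hn1 : ((n:ℝ) + 1) ≠ 0 := by positivity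
  have hnq : ((n:ℝ) + q + 1) ≠ 0 := by positivity
  field_simp
  ring

lemma v_tendsto {q : ℕ} (hq : 1 ≤ q) :
    Tendsto (fun n : ℕ => (n : ℝ) * t q n) atTop (𝓝 0) := by
  apply squeeze_zero (fun n => mul_nonneg (Nat.cast_nonneg n) (t_nonneg q n))
    (g := fun n : ℕ => 1 / ((n:ℝ) + 1))
  · intro n
    calc (n : ℝ) * t q n ≤ (n : ℝ) * (1 / ((n:ℝ)+1)^2) :=
          mul_le_mul_of_nonneg_left (t_le hq n) (Nat.cast_nonneg n)
      _ ≤ 1 / ((n:ℝ) + 1) := by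
          rw [mul_one_div, div_le_div_iff₀ (by positivity) (by positivity)]
          nlinarith [Nat.cast_nonneg (α := ℝ) n]
  · exact tendsto_one_div_add_atTop_nhds_zero_nat

lemma rec_T {q : ℕ} (hq : 1 ≤ q) :
    (q : ℝ) * T q = ((q : ℝ) + 1/2) ^ 2 * T (q+1) := by
  have hs1 := summable_t hq
  have hs2 := summable_t (q := q+1) (by omega)
  have h1 : HasSum (fun n => (q : ℝ) * t q n - ((q : ℝ) + 1/2) ^ 2 * t (q+1) n)
      ((q : ℝ) * T q - ((q : ℝ) + 1/2) ^ 2 * T (q+1)) :=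
    (hs1.hasSum.mul_left _).sub (hs2.hasSum.mul_left _)
  have h2 := h1.tendsto_sum_nat
  have h3 : ∀ N : ℕ, ∑ n ∈ Finset.range N,
      ((q : ℝ) * t q n - ((q : ℝ) + 1/2) ^ 2 * t (q+1) n)
      = (0:ℝ) * t q 0 - (N : ℝ) * t q N := by
    intro N
    have hsub := Finset.sum_range_sub' (f := fun n : ℕ => (n : ℝ) * t q n) N
    calc ∑ n ∈ Finset.range N, ((q : ℝ) * t q n - ((q : ℝ) + 1/2) ^ 2 * t (q+1) n)
        = ∑ n ∈ Finset.range N, (((n:ℕ) : ℝ) * t q n - (((n+1 : ℕ)) : ℝ) * t q (n+1)) := by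
          apply Finset.sum_congr rfl
          intro n _
          rw [key q n]
          push_cast
          ring
      _ = (0:ℝ) * t q 0 - (N : ℝ) * t q N := by
          rw [hsub]
          norm_num
  have h4 : Tendsto (fun N : ℕ => ∑ n ∈ Finset.range N,
      ((q : ℝ) * t q n - ((q : ℝ) + 1/2) ^ 2 * t (q+1) n)) atTop (𝓝 0) := by
    simp only [h3]
    simpa using (v_tendsto hq).neg
  have := tendsto_nhds_unique h2 h4
  linarith [this]

end Stmt12Aux

namespace Stmt12Aux

lemma gamma_half_add (m : ℕ) :
    Real.Gamma ((m : ℝ) + 1/2) = poch (1/2) m * Real.sqrt π := by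
  induction m with
  | zero => rw [Nat.cast_zero, zero_add, Real.Gamma_one_half_eq, poch_zero, one_mul]
  | succ m ih =>
    have h : ((m+1 : ℕ) : ℝ) + 1/2 = ((m : ℝ) + 1/2) + 1 := by push_cast; ring
    rw [h, Real.Gamma_add_one (by positivity), ih, poch_succ]
    ring

noncomputable def A (q : ℕ) : ℝ := Real.Gamma ((q:ℝ) + 1/2) ^ 2 / Real.Gamma q * T q

lemma A_step {q : ℕ} (hq : 1 ≤ q) : A (q + 1) = A q := by
  have hq0 : (0:ℝ) < (q:ℝ) := by exact_mod_cast hq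
  have hG : 0 < Real.Gamma (q:ℝ) := Real.Gamma_pos_of_pos hq0
  have h1 : ((q+1 : ℕ) : ℝ) = (q:ℝ) + 1 := by push_cast; ring
  have h2 : Real.Gamma ((q:ℝ) + 1) = (q:ℝ) * Real.Gamma (q:ℝ) :=
    Real.Gamma_add_one (ne_of_gt hq0)
  have h3 : Real.Gamma ((q:ℝ) + 1 + 1/2) = ((q:ℝ) + 1/2) * Real.Gamma ((q:ℝ) + 1/2) := by
    rw [show (q:ℝ) + 1 + 1/2 = ((q:ℝ) + 1/2) + 1 by ring, Real.Gamma_add_one (by positivity)]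
  have hrec := rec_T hq
  have hT : T (q+1) = (q:ℝ) * T q / ((q:ℝ) + 1/2)^2 := by
    field_simp at hrec ⊢
    linarith [hrec]
  unfold A
  rw [h1, h2, h3, hT]
  have hhalf : ((q:ℝ) + 1/2) ≠ 0 := by positivity
  field_simp

lemma A_const {q : ℕ} (hq : 1 ≤ q) : ∀ m : ℕ, A (q + m) = A q := by
  intro m
  induction m with
  | zero => rfl
  | succ m ih => rw [show q + (m+1) = (q+m) + 1 by omega, A_step (by omega), ih]

lemma fact_lower {q : ℕ} (hq : 1 ≤ q) :
    ∀ n : ℕ, 1 ≤ n → ((q+1).factorial : ℝ) * (n.factorial : ℝ) * ((n:ℝ) + 1)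
      ≤ 2 * ((n + q).factorial : ℝ) := by
  intro n hn
  induction n with
  | zero => omega
  | succ n ih =>
    rcases Nat.eq_or_lt_of_le hn with h | h
    · -- n + 1 = 1, so n = 0
      have hn0 : n = 0 := by omega
      subst hn0
      rw [show (0:ℕ) + 1 + q = q + 1 by omega]
      have hfp : (0:ℝ) < ((q+1).factorial : ℝ) := by exact_mod_cast Nat.factorial_pos (q+1)
      push_cast [Nat.factorial_one]
      nlinarith [hfp]
    · have hn1 : 1 ≤ n := by omega
      have ih' := ih hn1
      have hfacts : ((n + 1 + q).factorial : ℝ) = ((n+q).factorial : ℝ) * ((n:ℝ) + q + 1) := by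
        rw [show n + 1 + q = (n+q)+1 by omega, Nat.factorial_succ]; push_cast; ring
      have hfact2 : ((n+1).factorial : ℝ) = ((n:ℝ)+1) * (n.factorial : ℝ) := by
        rw [Nat.factorial_succ]; push_cast; ring
      rw [hfacts, hfact2]
      have hcast : (1:ℝ) ≤ (q:ℝ) := by exact_mod_cast hq
      have hX : (0:ℝ) ≤ ((q+1).factorial : ℝ) * (n.factorial : ℝ) * ((n:ℝ)+1) := by positivity
      have h5 : ((n:ℝ)+2) ≤ (n:ℝ)+q+1 := by linarith
      push_cast
      calc ((q+1).factorial : ℝ) * (((n:ℝ)+1) * (n.factorial : ℝ)) * ((n:ℝ)+1+1)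
          = (((q+1).factorial : ℝ) * (n.factorial : ℝ) * ((n:ℝ)+1)) * ((n:ℝ)+2) := by ring
        _ ≤ (((q+1).factorial : ℝ) * (n.factorial : ℝ) * ((n:ℝ)+1)) * ((n:ℝ)+q+1) :=
            mul_le_mul_of_nonneg_left h5 hX
        _ ≤ (2 * ((n+q).factorial : ℝ)) * ((n:ℝ)+q+1) :=
            mul_le_mul_of_nonneg_right ih' (by positivity)
        _ = 2 * (((n+q).factorial : ℝ) * ((n:ℝ)+(q:ℝ)+1)) := by ring

end Stmt12Aux

namespace Stmt12Aux

lemma t_tail_le {q : ℕ} (hq : 1 ≤ q) (n : ℕ) :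
    t q (n+1) ≤ 2 / (((q+1).factorial : ℝ)) * (1 / ((n:ℝ) + 2) ^ 2) := by
  unfold t
  have hb := poch_half_sq_le (n+1)
  have hd := fact_lower hq (n+1) (by omega)
  have hfp : (0:ℝ) < ((q+1).factorial : ℝ) := by exact_mod_cast Nat.factorial_pos (q+1)
  have hfn : (0:ℝ) < ((n+1).factorial : ℝ) := by exact_mod_cast Nat.factorial_pos (n+1)
  have hfnq : (0:ℝ) < ((n+1+q).factorial : ℝ) := by exact_mod_cast Nat.factorial_pos (n+1+q)
  -- poch(1/2)(n+1)^2 ≤ (n+1)!^2/(n+2)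
  have h1 : poch (1/2) (n+1) ^ 2 ≤ ((n+1).factorial : ℝ)^2 / ((n:ℝ)+2) := by
    rw [le_div_iff₀ (by positivity)]
    calc poch (1/2) (n+1) ^ 2 * ((n:ℝ) + 2)
        = poch (1/2) (n+1) ^ 2 * (((n+1:ℕ):ℝ) + 1) := by push_cast; ring
      _ ≤ ((n+1).factorial : ℝ)^2 := poch_half_sq_le (n+1)
  -- (n+1)! * (n+1+q)! ≥ (n+1)!^2 * (n+2) * (q+1)! / 2
  have h2 : ((n+1).factorial : ℝ)^2 * ((n:ℝ)+2) * ((q+1).factorial : ℝ) / 2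
      ≤ ((n+1).factorial : ℝ) * ((n+1+q).factorial : ℝ) := by
    have := fact_lower hq (n+1) (by omega)
    have h3 : ((q+1).factorial : ℝ) * ((n+1).factorial : ℝ) * ((n:ℝ)+2)
        ≤ 2 * ((n+1+q).factorial : ℝ) := by
      calc ((q+1).factorial : ℝ) * ((n+1).factorial : ℝ) * ((n:ℝ)+2)
          = ((q+1).factorial : ℝ) * ((n+1).factorial : ℝ) * (((n+1:ℕ):ℝ)+1) := by
            push_cast; ring
        _ ≤ 2 * ((n+1+q).factorial : ℝ) := this
    nlinarith [hfn]
  calc poch (1/2) (n+1) ^ 2 / (((n+1).factorial : ℝ) * ((n+1+q).factorial : ℝ))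
      ≤ (((n+1).factorial : ℝ)^2 / ((n:ℝ)+2))
        / (((n+1).factorial : ℝ)^2 * ((n:ℝ)+2) * ((q+1).factorial : ℝ) / 2) := by
        apply div_le_div₀ (by positivity) h1 (by positivity) h2
    _ = 2 / (((q+1).factorial : ℝ)) * (1 / ((n:ℝ) + 2) ^ 2) := by
        field_simp

lemma summable_sq_inv2 : Summable (fun n : ℕ => 1 / ((n : ℝ) + 2) ^ 2) := by
  have := (_root_.summable_nat_add_iff (f := fun n : ℕ => 1 / ((n : ℝ) + 1) ^ 2) 1).mpr
    summable_sq_inv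
  refine this.congr fun n => ?_
  push_cast
  ring_nf

noncomputable def K : ℝ := ∑' n : ℕ, 1 / ((n : ℝ) + 2) ^ 2

lemma K_nonneg : 0 ≤ K := tsum_nonneg fun n => by positivity

lemma tail_bound {q : ℕ} (hq : 1 ≤ q) :
    (∑' n : ℕ, t q (n+1)) ≤ 2 / (((q+1).factorial : ℝ)) * K := by
  have hs : Summable (fun n : ℕ => t q (n+1)) :=
    (_root_.summable_nat_add_iff 1).mpr (summable_t hq)
  have : (∑' n : ℕ, t q (n+1)) ≤ ∑' n : ℕ, 2 / (((q+1).factorial : ℝ)) * (1 / ((n:ℝ) + 2) ^ 2) :=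
    Summable.tsum_le_tsum (t_tail_le hq) hs (summable_sq_inv2.mul_left _)
  rwa [tsum_mul_left] at this

end Stmt12Aux

namespace Stmt12Aux

noncomputable def R (m : ℕ) : ℝ :=
  Real.Gamma ((m:ℝ) + 1/2) ^ 2 / (Real.Gamma (m:ℝ) * (m.factorial : ℝ))

lemma gammaSeq_pos (m : ℕ) (hm : 1 ≤ m) : 0 < Real.GammaSeq (1/2) m := by
  unfold Real.GammaSeq
  have h1 : (0:ℝ) < (m:ℝ) ^ ((1:ℝ)/2 : ℝ) := by
    apply Real.rpow_pos_of_pos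
    exact_mod_cast hm
  have h2 : (0:ℝ) < ∏ j ∈ Finset.range (m + 1), ((1:ℝ)/2 + j) :=
    Finset.prod_pos fun i _ => by positivity
  have h3 : (0:ℝ) < (m.factorial : ℝ) := by exact_mod_cast Nat.factorial_pos m
  positivity

lemma R_eq (m : ℕ) (hm : 1 ≤ m) :
    R m = π * ((m:ℝ) / ((m:ℝ) + 1/2)) ^ 2 * ((Real.GammaSeq (1/2) m) ^ 2)⁻¹ := by
  obtain ⟨k, rfl⟩ : ∃ k, m = k + 1 := ⟨m - 1, by omega⟩
  have hGm : Real.Gamma (((k+1:ℕ)):ℝ) = (k.factorial : ℝ) := by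
    push_cast
    exact Real.Gamma_nat_eq_factorial k
  have hpoch : Real.Gamma (((k+1:ℕ):ℝ) + 1/2) = poch (1/2) (k+1) * Real.sqrt π :=
    gamma_half_add (k+1)
  have hP : 0 < poch (1/2) (k+1) := poch_half_pos (k+1)
  have hGseq : Real.GammaSeq (1/2) (k+1)
      = ((k+1:ℕ):ℝ) ^ ((1:ℝ)/2) * ((k+1).factorial : ℝ) / (poch (1/2) (k+1) * (1/2 + ((k+1:ℕ):ℝ))) := by
    unfold Real.GammaSeq
    rw [show ∏ j ∈ Finset.range ((k+1) + 1), ((1:ℝ)/2 + j) = poch (1/2) ((k+1)+1) from rfl,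
      poch_succ]
  have hs2 : (((k+1:ℕ):ℝ) ^ ((1:ℝ)/2)) ^ 2 = ((k+1:ℕ):ℝ) := by
    rw [← Real.rpow_natCast (((k+1:ℕ):ℝ) ^ ((1:ℝ)/2)) 2, ← Real.rpow_mul (Nat.cast_nonneg _)]
    norm_num
  have hGpos := gammaSeq_pos (k+1) (by omega)
  have hfk : (0:ℝ) < (k.factorial : ℝ) := by exact_mod_cast Nat.factorial_pos k
  have hfk1 : ((k+1).factorial : ℝ) = (((k+1):ℕ):ℝ) * (k.factorial : ℝ) := by
    rw [Nat.factorial_succ]; push_cast; ring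
  have hsqpi : Real.sqrt π ^ 2 = π := Real.sq_sqrt pi_pos.le
  have hmpos : (0:ℝ) < ((k+1:ℕ):ℝ) := by exact_mod_cast Nat.succ_pos k
  have hfk1' : (0:ℝ) < ((k+1).factorial : ℝ) := by exact_mod_cast Nat.factorial_pos (k+1)
  unfold R
  rw [hGm, hpoch, hGseq, eq_comm]
  field_simp
  push_cast at hs2 hfk1 ⊢
  rw [hfk1]
  linear_combination (-((2*(k:ℝ)+3))^2*((k:ℝ)+1)*(k.factorial:ℝ)*Real.sqrt π ^ 2) * hs2
    + (-((2*(k:ℝ)+3))^2*((k:ℝ)+1)^2*(k.factorial:ℝ)) * hsqpi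

lemma R_tendsto : Tendsto R atTop (𝓝 1) := by
  have hGS : Tendsto (Real.GammaSeq (1/2)) atTop (𝓝 (Real.sqrt π)) := by
    have := Real.GammaSeq_tendsto_Gamma (1/2)
    rwa [Real.Gamma_one_half_eq] at this
  have hG2 : Tendsto (fun m => (Real.GammaSeq (1/2) m) ^ 2) atTop (𝓝 π) := by
    have := hGS.pow 2
    rwa [Real.sq_sqrt pi_pos.le] at this
  have hinv : Tendsto (fun m => ((Real.GammaSeq (1/2) m) ^ 2)⁻¹) atTop (𝓝 π⁻¹) :=
    hG2.inv₀ (ne_of_gt pi_pos)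
  have hden : Tendsto (fun m : ℕ => (m:ℝ) + 1/2) atTop atTop :=
    tendsto_atTop_add_const_right atTop _ tendsto_natCast_atTop_atTop
  have hz : Tendsto (fun m : ℕ => ((m:ℝ) + 1/2)⁻¹) atTop (𝓝 0) := hden.inv_tendsto_atTop
  have hfrac : Tendsto (fun m : ℕ => (m:ℝ) / ((m:ℝ) + 1/2)) atTop (𝓝 1) := by
    have h1 : Tendsto (fun m : ℕ => 1 - (1/2) * ((m:ℝ) + 1/2)⁻¹) atTop (𝓝 (1 - (1/2) * 0)) :=
      tendsto_const_nhds.sub (hz.const_mul _)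
    rw [show (1:ℝ) - (1/2) * 0 = 1 by norm_num] at h1
    refine h1.congr fun m => ?_
    have : ((m:ℝ) + 1/2) ≠ 0 := by positivity
    field_simp
    ring
  have hmain : Tendsto (fun m : ℕ => π * ((m:ℝ) / ((m:ℝ) + 1/2)) ^ 2
      * ((Real.GammaSeq (1/2) m) ^ 2)⁻¹) atTop (𝓝 (π * 1 ^ 2 * π⁻¹)) :=
    ((hfrac.pow 2).const_mul π).mul hinv
  rw [show π * 1 ^ 2 * π⁻¹ = 1 by field_simp] at hmain
  apply hmain.congr' ?_
  filter_upwards [eventually_ge_atTop 1] with m hm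
  exact (R_eq m hm).symm

end Stmt12Aux

namespace Stmt12Aux

lemma t_zero (q : ℕ) : t q 0 = 1 / (q.factorial : ℝ) := by
  unfold t
  simp [poch_zero]

lemma A_sub_R {m : ℕ} (hm : 1 ≤ m) :
    0 ≤ A m - R m ∧ A m - R m ≤ R m * (2 * K / ((m:ℝ) + 1)) := by
  have hmpos : (0:ℝ) < (m:ℝ) := by exact_mod_cast hm
  have hG : 0 < Real.Gamma (m:ℝ) := Real.Gamma_pos_of_pos hmpos
  have hGh : 0 < Real.Gamma ((m:ℝ) + 1/2) := Real.Gamma_pos_of_pos (by positivity)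
  have hfm : (0:ℝ) < (m.factorial : ℝ) := by exact_mod_cast Nat.factorial_pos m
  have hfm1 : ((m+1).factorial : ℝ) = ((m:ℝ)+1) * (m.factorial : ℝ) := by
    rw [Nat.factorial_succ]; push_cast; ring
  have hsplit : T m = t m 0 + ∑' n, t m (n+1) := Summable.tsum_eq_zero_add (summable_t hm)
  have hA : A m - R m = Real.Gamma ((m:ℝ) + 1/2) ^ 2 / Real.Gamma (m:ℝ) * ∑' n, t m (n+1) := by
    unfold A R
    rw [hsplit, t_zero]
    field_simp
    ring
  have htail0 : 0 ≤ ∑' n, t m (n+1) := tsum_nonneg fun n => t_nonneg m (n+1)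
  constructor
  · rw [hA]; positivity
  · rw [hA]
    have hb := tail_bound hm
    calc Real.Gamma ((m:ℝ) + 1/2) ^ 2 / Real.Gamma (m:ℝ) * ∑' n, t m (n+1)
        ≤ Real.Gamma ((m:ℝ) + 1/2) ^ 2 / Real.Gamma (m:ℝ)
          * (2 / (((m+1).factorial : ℝ)) * K) := by
          apply mul_le_mul_of_nonneg_left hb (by positivity)
      _ = R m * (2 * K / ((m:ℝ) + 1)) := by
          unfold R
          rw [hfm1]
          have h1 : ((m:ℝ)+1) ≠ 0 := by positivity
          have h2 : (m.factorial:ℝ) ≠ 0 := ne_of_gt hfm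
          field_simp

lemma A_tendsto : Tendsto A atTop (𝓝 1) := by
  have hdiff : Tendsto (fun m => A m - R m) atTop (𝓝 0) := by
    have hup : Tendsto (fun m : ℕ => R m * (2 * K / ((m:ℝ) + 1))) atTop (𝓝 (1 * 0)) := by
      apply R_tendsto.mul
      have h1 : Tendsto (fun m : ℕ => 2 * K * (1 / ((m:ℝ) + 1))) atTop (𝓝 (2 * K * 0)) :=
        tendsto_one_div_add_atTop_nhds_zero_nat.const_mul _
      rw [mul_zero] at h1
      refine h1.congr fun m => ?_
      ring
    rw [one_mul] at hup
    apply squeeze_zero' ?_ ?_ hup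
    · filter_upwards [eventually_ge_atTop 1] with m hm
      exact (A_sub_R hm).1
    · filter_upwards [eventually_ge_atTop 1] with m hm
      exact (A_sub_R hm).2
  have := R_tendsto.add hdiff
  rw [add_zero] at this
  refine this.congr fun m => ?_
  ring

lemma T_eq {q : ℕ} (hq : 1 ≤ q) :
    T q = Real.Gamma (q:ℝ) / Real.Gamma ((q:ℝ) + 1/2) ^ 2 := by
  have hA1 : A q = 1 := by
    have h1 : Tendsto (fun m : ℕ => A (m + q)) atTop (𝓝 1) :=
      A_tendsto.comp (tendsto_add_atTop_nat q)
    have h2 : (fun m : ℕ => A (m + q)) = fun _ : ℕ => A q := by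
      funext m
      rw [add_comm, A_const hq]
    rw [h2] at h1
    exact tendsto_nhds_unique tendsto_const_nhds h1
  have hmpos : (0:ℝ) < (q:ℝ) := by exact_mod_cast hq
  have hG : 0 < Real.Gamma (q:ℝ) := Real.Gamma_pos_of_pos hmpos
  have hGh : 0 < Real.Gamma ((q:ℝ) + 1/2) := Real.Gamma_pos_of_pos (by positivity)
  unfold A at hA1
  field_simp at hA1 ⊢
  linarith [hA1]

end Stmt12Aux

namespace Stmt12Aux

lemma poch_fact (n : ℕ) : ∀ q : ℕ, poch ((n:ℝ) + 1) q * (n.factorial : ℝ) = ((n+q).factorial : ℝ) := by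
  intro q
  induction q with
  | zero => simp [poch_zero]
  | succ q ih =>
    rw [poch_succ, show n + (q+1) = (n+q)+1 by omega, Nat.factorial_succ]
    push_cast
    nlinarith [ih]

end Stmt12Aux

open Stmt12Aux in
theorem stmt12 (p : ℕ) (hp : 3 ≤ p) (f : ℝ) :
    ∑' n : ℕ, (poch (1/2) n / n.factorial) ^ 2 *
        (((n : ℝ) + f) * ((n : ℝ) + f + 1) / poch ((n : ℝ) + 1) p) =
      Real.Gamma p / Real.Gamma (p + 1/2) ^ 2 *
        (f * (f + 1) + (f + 1) / (2 * ((p : ℝ) - 1)) +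
          9 / (16 * ((p : ℝ) - 1) * ((p : ℝ) - 2))) := by
  obtain ⟨k, rfl⟩ : ∃ k, p = k + 3 := ⟨p - 3, by omega⟩
  set c1 : ℝ := 2 * (f - ((k:ℝ)+3) + 1) with hc1
  set c0 : ℝ := (f - ((k:ℝ)+3)) * (f - ((k:ℝ)+3) + 1) with hc0
  have hterm : ∀ n : ℕ,
      (poch (1/2) n / n.factorial) ^ 2 *
        (((n : ℝ) + f) * ((n : ℝ) + f + 1) / poch ((n : ℝ) + 1) (k+3))
      = t (k+1) n + c1 * t (k+2) n + c0 * t (k+3) n := by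
    intro n
    have hfn : (0:ℝ) < (n.factorial : ℝ) := by exact_mod_cast Nat.factorial_pos n
    have hf1 : (0:ℝ) < ((n+(k+1)).factorial : ℝ) := by exact_mod_cast Nat.factorial_pos _
    have hpoch : poch ((n:ℝ) + 1) (k+3) = ((n+(k+3)).factorial : ℝ) / (n.factorial : ℝ) := by
      rw [eq_div_iff (ne_of_gt hfn)]
      exact poch_fact n (k+3)
    have hf2 : ((n+(k+2)).factorial : ℝ) = ((n+(k+1)).factorial : ℝ) * ((n:ℝ)+(k:ℝ)+2) := by
      rw [show n+(k+2) = (n+(k+1))+1 by omega, Nat.factorial_succ]; push_cast; ring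
    have hf3 : ((n+(k+3)).factorial : ℝ) = ((n+(k+2)).factorial : ℝ) * ((n:ℝ)+(k:ℝ)+3) := by
      rw [show n+(k+3) = (n+(k+2))+1 by omega, Nat.factorial_succ]; push_cast; ring
    unfold t
    rw [hpoch, hf3, hf2, hc1, hc0]
    have h2 : ((n:ℝ)+(k:ℝ)+2) ≠ 0 := by positivity
    have h3 : ((n:ℝ)+(k:ℝ)+3) ≠ 0 := by positivity
    field_simp
    ring
  rw [tsum_congr hterm]
  have s1 : Summable (t (k+1)) := summable_t (by omega)
  have s2 : Summable (t (k+2)) := summable_t (by omega)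
  have s3 : Summable (t (k+3)) := summable_t (by omega)
  rw [Summable.tsum_add (s1.add (s2.mul_left c1)) (s3.mul_left c0), Summable.tsum_add s1 (s2.mul_left c1),
    tsum_mul_left, tsum_mul_left]
  have e1 : (∑' n, t (k+1) n) = T (k+1) := rfl
  have e2 : (∑' n, t (k+2) n) = T (k+2) := rfl
  have e3 : (∑' n, t (k+3) n) = T (k+3) := rfl
  rw [e1, e2, e3, T_eq (by omega : 1 ≤ k+1), T_eq (by omega : 1 ≤ k+2), T_eq (by omega : 1 ≤ k+3)]
  push_cast
  set y : ℝ := (k : ℝ) with hy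
  have hy0 : 0 ≤ y := Nat.cast_nonneg k
  have hG2 : Real.Gamma (y+2) = (y+1) * Real.Gamma (y+1) := by
    rw [show y+2 = (y+1)+1 by ring, Real.Gamma_add_one (by positivity)]
  have hG3 : Real.Gamma (y+3) = (y+2) * Real.Gamma (y+2) := by
    rw [show y+3 = (y+2)+1 by ring, Real.Gamma_add_one (by positivity)]
  have hH2 : Real.Gamma (y+2+1/2) = (y+1+1/2) * Real.Gamma (y+1+1/2) := by
    rw [show y+2+1/2 = (y+1+1/2)+1 by ring, Real.Gamma_add_one (by positivity)]
  have hH3 : Real.Gamma (y+3+1/2) = (y+2+1/2) * Real.Gamma (y+2+1/2) := by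
    rw [show y+3+1/2 = (y+2+1/2)+1 by ring, Real.Gamma_add_one (by positivity)]
  rw [hG3, hH3, hH2, hG2]
  have hg2 : 0 < Real.Gamma (y+1+1/2) := Real.Gamma_pos_of_pos (by positivity)
  have h1 : (y+1+1/2) ≠ 0 := by positivity
  have h2 : (y+2+1/2) ≠ 0 := by positivity
  have h3 : (y+1) ≠ 0 := by positivity
  have h4 : (y+2) ≠ 0 := by positivity
  have h5 : y+3-1 = y+2 := by ring
  have h6 : y+3-2 = y+1 := by ring
  rw [h5, h6]
  field_simp
  ring
end
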